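/- arXiv:2405.16672 — 4 statements merged into one kernel-verified Lean document; each statement's English description precedes it below -/
import Mathlib

section
/- Let A ∈ {0,1}^{n×n} have all entries i.i.d. Bernoulli(p) with np ≥ 1, and set Ã = A/√(np). Then Var(‖Ã^T Ã‖_F^2) ≤ C(n + n^2 p^2 + n^3 p^4) for a universal constant C. -/
set_option maxHeartbeats 4000000

open MeasureTheory ProbabilityTheory Matrix Finset

/-- A real random variable is Bernoulli(p): it takes values in `{0,1}` and
takes the value `1` with probability `p`. -/
def IsBernoulli {Ω : Type*} [MeasurableSpace Ω] (μ : Measure Ω) (A : Ω → ℝ) (p : ℝ) : Prop :=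
  (∀ ω, A ω = 0 ∨ A ω = 1) ∧ μ {ω | A ω = 1} = ENNReal.ofReal p

namespace GramAux
open Finset

-- stepping lemma
lemma Mstep {n : ℕ} {q : ℝ} (hq0 : 0 ≤ q) (s : Finset (Fin n)) (k : ℕ) (hk : s.card ≤ k) :
    ∑ r : Fin n, q ^ (insert r s).card ≤ (k + n * q) * q ^ s.card := by
  have : ∀ r : Fin n, q ^ (insert r s).card ≤
      (if r ∈ s then 1 else 0) * q ^ s.card + q * q ^ s.card := by
    intro r
    by_cases hr : r ∈ s
    · rw [Finset.insert_eq_self.mpr hr]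
      simp [hr]
      positivity
    · rw [Finset.card_insert_of_notMem hr, pow_succ]
      simp [hr, mul_comm]
  calc ∑ r : Fin n, q ^ (insert r s).card
      ≤ ∑ r : Fin n, ((if r ∈ s then 1 else 0) * q ^ s.card + q * q ^ s.card) :=
        Finset.sum_le_sum fun r _ => this r
    _ = s.card * q ^ s.card + n * (q * q ^ s.card) := by
        rw [Finset.sum_add_distrib, ← Finset.sum_mul, Finset.sum_const]
        simp [Finset.sum_ite_mem, mul_comm]
    _ ≤ (k + n * q) * q ^ s.card := by
        have : (s.card : ℝ) ≤ k := by exact_mod_cast hk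
        have hqp : (0:ℝ) ≤ q ^ s.card := by positivity
        nlinarith [this, hqp]

lemma setrot4 {n : ℕ} (r1 r2 r3 r4 : Fin n) :
    ({r1, r2, r3, r4} : Finset (Fin n)) = insert r4 {r1, r2, r3} := by
  ext x; simp; tauto

lemma setrot3 {n : ℕ} (r1 r2 r3 : Fin n) :
    ({r1, r2, r3} : Finset (Fin n)) = insert r3 {r1, r2} := by
  ext x; simp; tauto

lemma setrot2 {n : ℕ} (r1 r2 : Fin n) :
    ({r1, r2} : Finset (Fin n)) = insert r2 {r1} := by
  ext x; simp; tauto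

lemma card3le {n : ℕ} (r1 r2 r3 : Fin n) : ({r1, r2, r3} : Finset (Fin n)).card ≤ 3 := by
  apply le_trans (Finset.card_insert_le _ _)
  apply Nat.succ_le_succ
  apply le_trans (Finset.card_insert_le _ _)
  simp

lemma card2le {n : ℕ} (r1 r2 : Fin n) : ({r1, r2} : Finset (Fin n)).card ≤ 2 := by
  apply le_trans (Finset.card_insert_le _ _); simp

lemma Mq {n : ℕ} {q : ℝ} (hq0 : 0 ≤ q) (s : Finset (Fin n)) : q ^ s.card ≤ 1 → True := fun _ => trivial

lemma M1sum {n : ℕ} {q : ℝ} : ∑ r1 : Fin n, q ^ ({r1} : Finset (Fin n)).card = n * q := by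
  simp [mul_comm]

lemma M2sum {n : ℕ} {q : ℝ} (hq0 : 0 ≤ q) :
    ∑ r1 : Fin n, ∑ r2 : Fin n, q ^ ({r1, r2} : Finset (Fin n)).card
      ≤ (1 + n * q) * (n * q) := by
  calc ∑ r1 : Fin n, ∑ r2 : Fin n, q ^ ({r1, r2} : Finset (Fin n)).card
      = ∑ r2 : Fin n, ∑ r1 : Fin n, q ^ (insert r1 {r2} : Finset (Fin n)).card := by
        rw [Finset.sum_comm]
    _ ≤ ∑ r2 : Fin n, (1 + n * q) * q ^ ({r2} : Finset (Fin n)).card :=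
        Finset.sum_le_sum fun r2 _ => by simpa using Mstep hq0 {r2} 1 (by simp)
    _ = (1 + n * q) * (n * q) := by rw [← Finset.mul_sum, M1sum]

lemma M3sum {n : ℕ} {q : ℝ} (hq0 : 0 ≤ q) :
    ∑ r1 : Fin n, ∑ r2 : Fin n, ∑ r3 : Fin n, q ^ ({r1, r2, r3} : Finset (Fin n)).card
      ≤ (2 + n * q) * ((1 + n * q) * (n * q)) := by
  have h1 : ∀ r1 r2 : Fin n, ∑ r3 : Fin n, q ^ ({r1, r2, r3} : Finset (Fin n)).card
      ≤ (2 + n * q) * q ^ ({r1, r2} : Finset (Fin n)).card := by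
    intro r1 r2
    calc ∑ r3 : Fin n, q ^ ({r1, r2, r3} : Finset (Fin n)).card
        = ∑ r3 : Fin n, q ^ (insert r3 {r1, r2} : Finset (Fin n)).card :=
          Finset.sum_congr rfl fun r3 _ => by rw [setrot3]
      _ ≤ _ := by simpa using Mstep hq0 {r1, r2} 2 (card2le r1 r2)
  calc ∑ r1 : Fin n, ∑ r2 : Fin n, ∑ r3 : Fin n, q ^ ({r1, r2, r3} : Finset (Fin n)).card
      ≤ ∑ r1 : Fin n, ∑ r2 : Fin n, (2 + n * q) * q ^ ({r1, r2} : Finset (Fin n)).card :=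
        Finset.sum_le_sum fun r1 _ => Finset.sum_le_sum fun r2 _ => h1 r1 r2
    _ = (2 + n * q) * ∑ r1 : Fin n, ∑ r2 : Fin n, q ^ ({r1, r2} : Finset (Fin n)).card := by
        simp [Finset.mul_sum]
    _ ≤ (2 + n * q) * ((1 + n * q) * (n * q)) := by
        have := M2sum (n := n) hq0
        have h2 : (0:ℝ) ≤ 2 + n * q := by positivity
        nlinarith [this]

lemma M4sum {n : ℕ} {q : ℝ} (hq0 : 0 ≤ q) :
    ∑ r1 : Fin n, ∑ r2 : Fin n, ∑ r3 : Fin n, ∑ r4 : Fin n,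
        q ^ ({r1, r2, r3, r4} : Finset (Fin n)).card
      ≤ (3 + n * q) * ((2 + n * q) * ((1 + n * q) * (n * q))) := by
  have h1 : ∀ r1 r2 r3 : Fin n, ∑ r4 : Fin n, q ^ ({r1, r2, r3, r4} : Finset (Fin n)).card
      ≤ (3 + n * q) * q ^ ({r1, r2, r3} : Finset (Fin n)).card := by
    intro r1 r2 r3
    calc ∑ r4 : Fin n, q ^ ({r1, r2, r3, r4} : Finset (Fin n)).card
        = ∑ r4 : Fin n, q ^ (insert r4 {r1, r2, r3} : Finset (Fin n)).card :=
          Finset.sum_congr rfl fun r4 _ => by rw [setrot4]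
      _ ≤ _ := by simpa using Mstep hq0 {r1, r2, r3} 3 (card3le r1 r2 r3)
  calc ∑ r1 : Fin n, ∑ r2 : Fin n, ∑ r3 : Fin n, ∑ r4 : Fin n,
        q ^ ({r1, r2, r3, r4} : Finset (Fin n)).card
      ≤ ∑ r1 : Fin n, ∑ r2 : Fin n, ∑ r3 : Fin n,
          (3 + n * q) * q ^ ({r1, r2, r3} : Finset (Fin n)).card :=
        Finset.sum_le_sum fun r1 _ => Finset.sum_le_sum fun r2 _ =>
          Finset.sum_le_sum fun r3 _ => h1 r1 r2 r3
    _ = (3 + n * q) * ∑ r1 : Fin n, ∑ r2 : Fin n, ∑ r3 : Fin n,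
          q ^ ({r1, r2, r3} : Finset (Fin n)).card := by
        simp [Finset.mul_sum]
    _ ≤ _ := by
        have := M3sum (n := n) hq0
        have h2 : (0:ℝ) ≤ 3 + n * q := by positivity
        nlinarith [this]
open Finset

variable {n : ℕ}

def T8 (r1 r2 r3 r4 i j k l : Fin n) : Finset (Fin n × Fin n) :=
  {(r1,i),(r1,j),(r2,i),(r2,j),(r3,k),(r3,l),(r4,k),(r4,l)}

lemma colinj (c : Fin n) : Function.Injective (fun r : Fin n => (r, c)) := by
  intro a b h; simpa using h

lemma cardB1 (r1 r2 r3 r4 i : Fin n) :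
    (T8 r1 r2 r3 r4 i i i i).card = ({r1,r2,r3,r4} : Finset (Fin n)).card := by
  have : T8 r1 r2 r3 r4 i i i i = ({r1,r2,r3,r4} : Finset (Fin n)).image (fun r => (r, i)) := by
    ext ⟨a, b⟩
    simp only [T8, Finset.mem_insert, Finset.mem_singleton, Finset.mem_image, Prod.mk.injEq]
    aesop
  rw [this, Finset.card_image_of_injective _ (colinj i)]

lemma cardB2 (r1 r2 r3 r4 i l : Fin n) (hil : i ≠ l) :
    (T8 r1 r2 r3 r4 i i i l).card
      = ({r1,r2,r3,r4} : Finset (Fin n)).card + ({r3,r4} : Finset (Fin n)).card := by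
  have he : T8 r1 r2 r3 r4 i i i l
      = ({r1,r2,r3,r4} : Finset (Fin n)).image (fun r => (r, i))
        ∪ ({r3,r4} : Finset (Fin n)).image (fun r => (r, l)) := by
    ext ⟨a, b⟩
    simp only [T8, Finset.mem_insert, Finset.mem_singleton, Finset.mem_union,
      Finset.mem_image, Prod.mk.injEq]
    aesop
  have hd : Disjoint (({r1,r2,r3,r4} : Finset (Fin n)).image (fun r => (r, i)))
      (({r3,r4} : Finset (Fin n)).image (fun r => (r, l))) := by
    rw [Finset.disjoint_left]
    rintro ⟨a, b⟩ h1 h2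
    simp only [Finset.mem_image, Prod.mk.injEq] at h1 h2
    obtain ⟨_, _, _, rfl⟩ := h1
    obtain ⟨_, _, _, h⟩ := h2
    exact hil (by tauto)
  rw [he, Finset.card_union_of_disjoint hd,
    Finset.card_image_of_injective _ (colinj i), Finset.card_image_of_injective _ (colinj l)]

lemma cardB3 (r1 r2 r3 r4 i j : Fin n) (hij : i ≠ j) :
    (T8 r1 r2 r3 r4 i j i j).card = 2 * ({r1,r2,r3,r4} : Finset (Fin n)).card := by
  have he : T8 r1 r2 r3 r4 i j i j
      = ({r1,r2,r3,r4} : Finset (Fin n)).image (fun r => (r, i))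
        ∪ ({r1,r2,r3,r4} : Finset (Fin n)).image (fun r => (r, j)) := by
    ext ⟨a, b⟩
    simp only [T8, Finset.mem_insert, Finset.mem_singleton, Finset.mem_union,
      Finset.mem_image, Prod.mk.injEq]
    aesop
  have hd : Disjoint (({r1,r2,r3,r4} : Finset (Fin n)).image (fun r => (r, i)))
      (({r1,r2,r3,r4} : Finset (Fin n)).image (fun r => (r, j))) := by
    rw [Finset.disjoint_left]
    rintro ⟨a, b⟩ h1 h2
    simp only [Finset.mem_image, Prod.mk.injEq] at h1 h2
    obtain ⟨_, _, _, rfl⟩ := h1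
    obtain ⟨_, _, _, h⟩ := h2
    exact hij (by tauto)
  rw [he, Finset.card_union_of_disjoint hd,
    Finset.card_image_of_injective _ (colinj i), Finset.card_image_of_injective _ (colinj j)]
  ring

lemma cardB4 (r1 r2 r3 r4 i j l : Fin n) (hij : i ≠ j) (hil : i ≠ l) (hjl : j ≠ l) :
    (T8 r1 r2 r3 r4 i j i l).card
      = ({r1,r2,r3,r4} : Finset (Fin n)).card + ({r1,r2} : Finset (Fin n)).card
        + ({r3,r4} : Finset (Fin n)).card := by
  have he : T8 r1 r2 r3 r4 i j i l
      = (({r1,r2,r3,r4} : Finset (Fin n)).image (fun r => (r, i))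
        ∪ ({r1,r2} : Finset (Fin n)).image (fun r => (r, j)))
        ∪ ({r3,r4} : Finset (Fin n)).image (fun r => (r, l)) := by
    ext ⟨a, b⟩
    simp only [T8, Finset.mem_insert, Finset.mem_singleton, Finset.mem_union,
      Finset.mem_image, Prod.mk.injEq]
    aesop
  have hd1 : Disjoint (({r1,r2,r3,r4} : Finset (Fin n)).image (fun r => (r, i)))
      (({r1,r2} : Finset (Fin n)).image (fun r => (r, j))) := by
    rw [Finset.disjoint_left]
    rintro ⟨a, b⟩ h1 h2
    simp only [Finset.mem_image, Prod.mk.injEq] at h1 h2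
    obtain ⟨_, _, _, rfl⟩ := h1
    obtain ⟨_, _, _, h⟩ := h2
    exact hij (by tauto)
  have hd2 : Disjoint (({r1,r2,r3,r4} : Finset (Fin n)).image (fun r => (r, i))
      ∪ ({r1,r2} : Finset (Fin n)).image (fun r => (r, j)))
      (({r3,r4} : Finset (Fin n)).image (fun r => (r, l))) := by
    rw [Finset.disjoint_left]
    rintro ⟨a, b⟩ h1 h2
    simp only [Finset.mem_union, Finset.mem_image, Prod.mk.injEq] at h1 h2
    obtain ⟨_, _, _, rfl⟩ := h2
    rcases h1 with ⟨_, _, _, h⟩ | ⟨_, _, _, h⟩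
    · exact hil h
    · exact hjl h
  rw [he, Finset.card_union_of_disjoint hd2, Finset.card_union_of_disjoint hd1,
    Finset.card_image_of_injective _ (colinj i), Finset.card_image_of_injective _ (colinj j),
    Finset.card_image_of_injective _ (colinj l)]
open Finset

lemma dupA {n : ℕ} (r1 r3 : Fin n) : ({r1,r1,r3,r3} : Finset (Fin n)) = {r1,r3} := by
  ext x; simp
lemma dupB {n : ℕ} (r1 r3 r4 : Fin n) : ({r1,r1,r3,r4} : Finset (Fin n)) = {r1,r3,r4} := by
  ext x; simp
lemma dupC {n : ℕ} (r1 r2 r3 : Fin n) : ({r1,r2,r3,r3} : Finset (Fin n)) = {r1,r2,r3} := by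
  ext x
  simp only [Finset.mem_insert, Finset.mem_singleton]
  tauto

lemma collapse_both {n : ℕ} (f : Fin n → Fin n → Fin n → Fin n → ℝ) :
    ∑ r1 : Fin n, ∑ r2 : Fin n, ∑ r3 : Fin n, ∑ r4 : Fin n,
      (if r1 = r2 then (1:ℝ) else 0) * (if r3 = r4 then (1:ℝ) else 0) * f r1 r2 r3 r4
      = ∑ r1 : Fin n, ∑ r3 : Fin n, f r1 r1 r3 r3 := by
  simp [ite_mul, Finset.sum_ite_eq]

lemma collapse_12 {n : ℕ} (f : Fin n → Fin n → Fin n → Fin n → ℝ) :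
    ∑ r1 : Fin n, ∑ r2 : Fin n, ∑ r3 : Fin n, ∑ r4 : Fin n,
      (if r1 = r2 then (1:ℝ) else 0) * f r1 r2 r3 r4
      = ∑ r1 : Fin n, ∑ r3 : Fin n, ∑ r4 : Fin n, f r1 r1 r3 r4 := by
  simp [ite_mul, Finset.sum_ite_eq]

lemma collapse_34 {n : ℕ} (f : Fin n → Fin n → Fin n → Fin n → ℝ) :
    ∑ r1 : Fin n, ∑ r2 : Fin n, ∑ r3 : Fin n, ∑ r4 : Fin n,
      (if r3 = r4 then (1:ℝ) else 0) * f r1 r2 r3 r4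
      = ∑ r1 : Fin n, ∑ r2 : Fin n, ∑ r3 : Fin n, f r1 r2 r3 r3 := by
  simp [ite_mul, Finset.sum_ite_eq]

-- helper real inequalities
lemma expand_poly (x : ℝ) (hx : 1 ≤ x) :
    (3 + x) * ((2 + x) * ((1 + x) * x)) ≤ 24 * x^4 := by nlinarith [sq_nonneg x, sq_nonneg (x-1), sq_nonneg (x^2-1), sq_nonneg (x^2-x)]

lemma expand_poly3 (x : ℝ) (hx : 1 ≤ x) :
    (2 + x) * ((1 + x) * x) ≤ 6 * x^3 := by nlinarith [sq_nonneg x, sq_nonneg (x-1)]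

lemma expand_poly2 (x : ℝ) (hx : 1 ≤ x) :
    (1 + x) * x ≤ 2 * x^2 := by nlinarith

lemma expand_poly_gen (x : ℝ) (hx : 0 ≤ x) :
    (3 + x) * ((2 + x) * ((1 + x) * x)) ≤ 24 * (x + x^4) := by
  nlinarith [sq_nonneg (x-1), sq_nonneg x, mul_nonneg hx hx, sq_nonneg (x^2-x), sq_nonneg (x^2-1), mul_nonneg (mul_nonneg hx hx) hx]

section TypeSums
variable {n : ℕ} {p : ℝ}

lemma typeB1sum (hp0 : 0 < p) (hnp : 1 ≤ (n:ℝ) * p) (i : Fin n) :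
    ∑ r1 : Fin n, ∑ r2 : Fin n, ∑ r3 : Fin n, ∑ r4 : Fin n,
        p ^ (T8 r1 r2 r3 r4 i i i i).card ≤ 24 * ((n:ℝ)*p)^4 := by
  calc ∑ r1 : Fin n, ∑ r2 : Fin n, ∑ r3 : Fin n, ∑ r4 : Fin n, p ^ (T8 r1 r2 r3 r4 i i i i).card
      = ∑ r1 : Fin n, ∑ r2 : Fin n, ∑ r3 : Fin n, ∑ r4 : Fin n,
          p ^ ({r1,r2,r3,r4} : Finset (Fin n)).card := by
        refine Finset.sum_congr rfl fun r1 _ => Finset.sum_congr rfl fun r2 _ =>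
          Finset.sum_congr rfl fun r3 _ => Finset.sum_congr rfl fun r4 _ => ?_
        rw [cardB1]
    _ ≤ (3 + n*p) * ((2 + n*p) * ((1 + n*p) * (n*p))) := M4sum hp0.le
    _ ≤ 24 * ((n:ℝ)*p)^4 := expand_poly _ hnp

lemma typeB3sum (hp0 : 0 < p) (i j : Fin n) (hij : i ≠ j) :
    ∑ r1 : Fin n, ∑ r2 : Fin n, ∑ r3 : Fin n, ∑ r4 : Fin n,
        p ^ (T8 r1 r2 r3 r4 i j i j).card ≤ 24 * ((n:ℝ)*p^2 + ((n:ℝ)*p^2)^4) := by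
  have hq0 : (0:ℝ) ≤ p^2 := sq_nonneg p
  calc ∑ r1 : Fin n, ∑ r2 : Fin n, ∑ r3 : Fin n, ∑ r4 : Fin n, p ^ (T8 r1 r2 r3 r4 i j i j).card
      = ∑ r1 : Fin n, ∑ r2 : Fin n, ∑ r3 : Fin n, ∑ r4 : Fin n,
          (p^2) ^ ({r1,r2,r3,r4} : Finset (Fin n)).card := by
        refine Finset.sum_congr rfl fun r1 _ => Finset.sum_congr rfl fun r2 _ =>
          Finset.sum_congr rfl fun r3 _ => Finset.sum_congr rfl fun r4 _ => ?_
        rw [cardB3 _ _ _ _ _ _ hij, pow_mul]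
    _ ≤ (3 + n*p^2) * ((2 + n*p^2) * ((1 + n*p^2) * (n*p^2))) := M4sum hq0
    _ ≤ 24 * ((n:ℝ)*p^2 + ((n:ℝ)*p^2)^4) := expand_poly_gen _ (by positivity)

lemma card_pair_eq (r s : Fin n) (h : r ≠ s) : ({r, s} : Finset (Fin n)).card = 2 := by
  rw [Finset.card_insert_of_notMem (by simpa using h)]; simp

lemma card_pair_self (r : Fin n) : ({r, r} : Finset (Fin n)).card = 1 := by
  simp

lemma typeB2sum (hp0 : 0 < p) (hp1 : p ≤ 1) (hnp : 1 ≤ (n:ℝ) * p) (i l : Fin n) (hil : i ≠ l) :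
    ∑ r1 : Fin n, ∑ r2 : Fin n, ∑ r3 : Fin n, ∑ r4 : Fin n,
        p ^ (T8 r1 r2 r3 r4 i i i l).card
      ≤ 6 * ((n:ℝ)*p)^3 * p + 24 * ((n:ℝ)*p)^4 * p^2 := by
  have step1 : ∀ r1 r2 r3 r4 : Fin n, p ^ (T8 r1 r2 r3 r4 i i i l).card
      ≤ (if r3 = r4 then (1:ℝ) else 0) * (p ^ ({r1,r2,r3,r4} : Finset (Fin n)).card * p)
        + p^2 * p ^ ({r1,r2,r3,r4} : Finset (Fin n)).card := by
    intro r1 r2 r3 r4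
    rw [cardB2 _ _ _ _ _ _ hil, pow_add]
    have h2 : (0:ℝ) ≤ p ^ ({r1,r2,r3,r4} : Finset (Fin n)).card := by positivity
    by_cases h : r3 = r4
    · subst h
      rw [card_pair_self, pow_one, if_pos rfl, one_mul]
      nlinarith [mul_nonneg (sq_nonneg p) h2]
    · rw [card_pair_eq _ _ h, if_neg h, zero_mul, zero_add]
      exact le_of_eq (by ring)
  have hsum1 : ∑ r1 : Fin n, ∑ r2 : Fin n, ∑ r3 : Fin n, ∑ r4 : Fin n,
      (if r3 = r4 then (1:ℝ) else 0) * (p ^ ({r1,r2,r3,r4} : Finset (Fin n)).card * p)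
      = ∑ r1 : Fin n, ∑ r2 : Fin n, ∑ r3 : Fin n,
          p ^ ({r1,r2,r3} : Finset (Fin n)).card * p := by
    rw [collapse_34 (f := fun r1 r2 r3 r4 => p ^ ({r1,r2,r3,r4} : Finset (Fin n)).card * p)]
    refine Finset.sum_congr rfl fun r1 _ => Finset.sum_congr rfl fun r2 _ =>
      Finset.sum_congr rfl fun r3 _ => ?_
    rw [dupC]
  have hM3 := M3sum (n := n) hp0.le
  have hM4 := M4sum (n := n) hp0.le
  have h3 := expand_poly3 ((n:ℝ)*p) hnp
  have h4 := expand_poly ((n:ℝ)*p) hnp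
  calc ∑ r1 : Fin n, ∑ r2 : Fin n, ∑ r3 : Fin n, ∑ r4 : Fin n, p ^ (T8 r1 r2 r3 r4 i i i l).card
      ≤ ∑ r1 : Fin n, ∑ r2 : Fin n, ∑ r3 : Fin n, ∑ r4 : Fin n,
          ((if r3 = r4 then (1:ℝ) else 0) * (p ^ ({r1,r2,r3,r4} : Finset (Fin n)).card * p)
            + p^2 * p ^ ({r1,r2,r3,r4} : Finset (Fin n)).card) :=
        Finset.sum_le_sum fun r1 _ => Finset.sum_le_sum fun r2 _ =>
          Finset.sum_le_sum fun r3 _ => Finset.sum_le_sum fun r4 _ => step1 r1 r2 r3 r4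
    _ = (∑ r1 : Fin n, ∑ r2 : Fin n, ∑ r3 : Fin n,
          p ^ ({r1,r2,r3} : Finset (Fin n)).card) * p
        + p^2 * ∑ r1 : Fin n, ∑ r2 : Fin n, ∑ r3 : Fin n, ∑ r4 : Fin n,
            p ^ ({r1,r2,r3,r4} : Finset (Fin n)).card := by
        simp only [Finset.sum_add_distrib]
        rw [hsum1]
        simp [Finset.mul_sum, Finset.sum_mul]
    _ ≤ 6 * ((n:ℝ)*p)^3 * p + 24 * ((n:ℝ)*p)^4 * p^2 := by
        nlinarith [hM3, hM4, h3, h4, hp0.le, sq_nonneg p, mul_pos hp0 hp0]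

lemma typeB4sum (hp0 : 0 < p) (hp1 : p ≤ 1) (hnp : 1 ≤ (n:ℝ) * p) (i j l : Fin n)
    (hij : i ≠ j) (hil : i ≠ l) (hjl : j ≠ l) :
    ∑ r1 : Fin n, ∑ r2 : Fin n, ∑ r3 : Fin n, ∑ r4 : Fin n,
        p ^ (T8 r1 r2 r3 r4 i j i l).card
      ≤ 2 * ((n:ℝ)*p)^2 * p^2 + 12 * ((n:ℝ)*p)^3 * p^3 + 24 * ((n:ℝ)*p)^4 * p^4 := by
  have step1 : ∀ r1 r2 r3 r4 : Fin n, p ^ (T8 r1 r2 r3 r4 i j i l).card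
      ≤ (if r1 = r2 then (1:ℝ) else 0) * ((if r3 = r4 then (1:ℝ) else 0)
          * (p ^ ({r1,r2,r3,r4} : Finset (Fin n)).card * p^2))
        + (if r1 = r2 then (1:ℝ) else 0) * (p ^ ({r1,r2,r3,r4} : Finset (Fin n)).card * p^3)
        + (if r3 = r4 then (1:ℝ) else 0) * (p ^ ({r1,r2,r3,r4} : Finset (Fin n)).card * p^3)
        + p^4 * p ^ ({r1,r2,r3,r4} : Finset (Fin n)).card := by
    intro r1 r2 r3 r4
    rw [cardB4 _ _ _ _ _ _ _ hij hil hjl, pow_add, pow_add]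
    have h2 : (0:ℝ) ≤ p ^ ({r1,r2,r3,r4} : Finset (Fin n)).card := by positivity
    by_cases h12 : r1 = r2 <;> by_cases h34 : r3 = r4
    · subst h12; subst h34
      rw [card_pair_self, card_pair_self, pow_one, if_pos rfl, if_pos rfl]
      have e1 : (0:ℝ) ≤ p ^ ({r1,r1,r3,r3} : Finset (Fin n)).card := by positivity
      nlinarith [mul_nonneg e1 (sq_nonneg p), mul_nonneg e1 (mul_nonneg (sq_nonneg p) hp0.le),
        mul_nonneg e1 (mul_nonneg (sq_nonneg p) (sq_nonneg p))]
    · subst h12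
      rw [card_pair_self, card_pair_eq _ _ h34, pow_one, if_pos rfl, if_neg h34]
      have e1 : (0:ℝ) ≤ p ^ ({r1,r1,r3,r4} : Finset (Fin n)).card := by positivity
      nlinarith [mul_nonneg e1 (mul_nonneg (sq_nonneg p) (sq_nonneg p))]
    · subst h34
      rw [card_pair_eq _ _ h12, card_pair_self, pow_one, if_neg h12, if_pos rfl]
      have e1 : (0:ℝ) ≤ p ^ ({r1,r2,r3,r3} : Finset (Fin n)).card := by positivity
      nlinarith [mul_nonneg e1 (mul_nonneg (sq_nonneg p) (sq_nonneg p))]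
    · rw [card_pair_eq _ _ h12, card_pair_eq _ _ h34, if_neg h12, if_neg h34]
      exact le_of_eq (by ring)
  have hc1 : ∑ r1 : Fin n, ∑ r2 : Fin n, ∑ r3 : Fin n, ∑ r4 : Fin n,
      (if r1 = r2 then (1:ℝ) else 0) * ((if r3 = r4 then (1:ℝ) else 0)
        * (p ^ ({r1,r2,r3,r4} : Finset (Fin n)).card * p^2))
      = (∑ r1 : Fin n, ∑ r3 : Fin n, p ^ ({r1,r3} : Finset (Fin n)).card) * p^2 := by
    have := collapse_both (f := fun r1 r2 r3 r4 =>
      p ^ ({r1,r2,r3,r4} : Finset (Fin n)).card * p^2)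
    rw [show (∑ r1 : Fin n, ∑ r2 : Fin n, ∑ r3 : Fin n, ∑ r4 : Fin n,
      (if r1 = r2 then (1:ℝ) else 0) * ((if r3 = r4 then (1:ℝ) else 0)
        * (p ^ ({r1,r2,r3,r4} : Finset (Fin n)).card * p^2)))
      = ∑ r1 : Fin n, ∑ r2 : Fin n, ∑ r3 : Fin n, ∑ r4 : Fin n,
      ((if r1 = r2 then (1:ℝ) else 0) * (if r3 = r4 then (1:ℝ) else 0)
        * (p ^ ({r1,r2,r3,r4} : Finset (Fin n)).card * p^2)) from by
        refine Finset.sum_congr rfl fun r1 _ => Finset.sum_congr rfl fun r2 _ =>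
          Finset.sum_congr rfl fun r3 _ => Finset.sum_congr rfl fun r4 _ => by ring, this]
    rw [Finset.sum_mul]
    refine Finset.sum_congr rfl fun r1 _ => ?_
    rw [Finset.sum_mul]
    refine Finset.sum_congr rfl fun r3 _ => ?_
    rw [dupA]
  have hc2 : ∑ r1 : Fin n, ∑ r2 : Fin n, ∑ r3 : Fin n, ∑ r4 : Fin n,
      (if r1 = r2 then (1:ℝ) else 0) * (p ^ ({r1,r2,r3,r4} : Finset (Fin n)).card * p^3)
      = (∑ r1 : Fin n, ∑ r3 : Fin n, ∑ r4 : Fin n,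
          p ^ ({r1,r3,r4} : Finset (Fin n)).card) * p^3 := by
    rw [collapse_12 (f := fun r1 r2 r3 r4 =>
      p ^ ({r1,r2,r3,r4} : Finset (Fin n)).card * p^3)]
    rw [Finset.sum_mul]
    refine Finset.sum_congr rfl fun r1 _ => ?_
    rw [Finset.sum_mul]
    refine Finset.sum_congr rfl fun r3 _ => ?_
    rw [Finset.sum_mul]
    refine Finset.sum_congr rfl fun r4 _ => ?_
    rw [dupB]
  have hc3 : ∑ r1 : Fin n, ∑ r2 : Fin n, ∑ r3 : Fin n, ∑ r4 : Fin n,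
      (if r3 = r4 then (1:ℝ) else 0) * (p ^ ({r1,r2,r3,r4} : Finset (Fin n)).card * p^3)
      = (∑ r1 : Fin n, ∑ r2 : Fin n, ∑ r3 : Fin n,
          p ^ ({r1,r2,r3} : Finset (Fin n)).card) * p^3 := by
    rw [collapse_34 (f := fun r1 r2 r3 r4 =>
      p ^ ({r1,r2,r3,r4} : Finset (Fin n)).card * p^3)]
    rw [Finset.sum_mul]
    refine Finset.sum_congr rfl fun r1 _ => ?_
    rw [Finset.sum_mul]
    refine Finset.sum_congr rfl fun r2 _ => ?_
    rw [Finset.sum_mul]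
    refine Finset.sum_congr rfl fun r3 _ => ?_
    rw [dupC]
  have hM2 := M2sum (n := n) hp0.le
  have hM3 := M3sum (n := n) hp0.le
  have hM4 := M4sum (n := n) hp0.le
  have h2 := expand_poly2 ((n:ℝ)*p) hnp
  have h3 := expand_poly3 ((n:ℝ)*p) hnp
  have h4 := expand_poly ((n:ℝ)*p) hnp
  calc ∑ r1 : Fin n, ∑ r2 : Fin n, ∑ r3 : Fin n, ∑ r4 : Fin n, p ^ (T8 r1 r2 r3 r4 i j i l).card
      ≤ ∑ r1 : Fin n, ∑ r2 : Fin n, ∑ r3 : Fin n, ∑ r4 : Fin n,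
          ((if r1 = r2 then (1:ℝ) else 0) * ((if r3 = r4 then (1:ℝ) else 0)
            * (p ^ ({r1,r2,r3,r4} : Finset (Fin n)).card * p^2))
          + (if r1 = r2 then (1:ℝ) else 0) * (p ^ ({r1,r2,r3,r4} : Finset (Fin n)).card * p^3)
          + (if r3 = r4 then (1:ℝ) else 0) * (p ^ ({r1,r2,r3,r4} : Finset (Fin n)).card * p^3)
          + p^4 * p ^ ({r1,r2,r3,r4} : Finset (Fin n)).card) :=
        Finset.sum_le_sum fun r1 _ => Finset.sum_le_sum fun r2 _ =>
          Finset.sum_le_sum fun r3 _ => Finset.sum_le_sum fun r4 _ => step1 r1 r2 r3 r4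
    _ = (∑ r1 : Fin n, ∑ r3 : Fin n, p ^ ({r1,r3} : Finset (Fin n)).card) * p^2
        + (∑ r1 : Fin n, ∑ r3 : Fin n, ∑ r4 : Fin n,
            p ^ ({r1,r3,r4} : Finset (Fin n)).card) * p^3
        + (∑ r1 : Fin n, ∑ r2 : Fin n, ∑ r3 : Fin n,
            p ^ ({r1,r2,r3} : Finset (Fin n)).card) * p^3
        + p^4 * ∑ r1 : Fin n, ∑ r2 : Fin n, ∑ r3 : Fin n, ∑ r4 : Fin n,
            p ^ ({r1,r2,r3,r4} : Finset (Fin n)).card := by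
        simp only [Finset.sum_add_distrib]
        rw [hc1, hc2, hc3]
        congr 1
        simp [Finset.mul_sum]
    _ ≤ 2 * ((n:ℝ)*p)^2 * p^2 + 12 * ((n:ℝ)*p)^3 * p^3 + 24 * ((n:ℝ)*p)^4 * p^4 := by
        nlinarith [hM2, hM3, hM4, h2, h3, h4, hp0.le, sq_nonneg p, sq_nonneg (p^2),
          mul_nonneg (sq_nonneg p) hp0.le, mul_nonneg (mul_nonneg (sq_nonneg p) hp0.le) hp0.le]

lemma prod01_insert {α : Type*} [DecidableEq α] (f : α → ℝ) (h01 : ∀ x, f x = 0 ∨ f x = 1)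
    (x : α) (s : Finset α) : f x * ∏ r ∈ s, f r = ∏ r ∈ insert x s, f r := by
  by_cases hx : x ∈ s
  · rw [Finset.insert_eq_self.mpr hx]
    rcases h01 x with h | h
    · rw [h, zero_mul, Finset.prod_eq_zero hx h]
    · rw [h, one_mul]
  · rw [Finset.prod_insert hx]

lemma prod01_eight {α : Type*} [DecidableEq α] (f : α → ℝ) (h01 : ∀ x, f x = 0 ∨ f x = 1)
    (x1 x2 x3 x4 x5 x6 x7 x8 : α) :
    ∏ q ∈ ({x1,x2,x3,x4,x5,x6,x7,x8} : Finset α), f q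
      = f x1 * (f x2 * (f x3 * (f x4 * (f x5 * (f x6 * (f x7 * f x8)))))) := by
  rw [← prod01_insert f h01 x1, ← prod01_insert f h01 x2, ← prod01_insert f h01 x3,
    ← prod01_insert f h01 x4, ← prod01_insert f h01 x5, ← prod01_insert f h01 x6,
    ← prod01_insert f h01 x7, Finset.prod_singleton]

lemma T8perm {n : ℕ} (r1 r2 r3 r4 i j k l : Fin n) :
    T8 r1 r2 r3 r4 i j k l
      = ({(r2,i),(r2,j),(r1,i),(r1,j),(r4,k),(r4,l),(r3,k),(r3,l)} : Finset (Fin n × Fin n)) := by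
  ext x
  simp only [T8, Finset.mem_insert, Finset.mem_singleton]
  tauto

end TypeSums
section
variable {Ω : Type} [mΩ : MeasurableSpace Ω] {μ : Measure Ω} [IsProbabilityMeasure μ]
  {n : ℕ} {p : ℝ} {A : Ω → Matrix (Fin n) (Fin n) ℝ}

lemma intT (hmeas : ∀ i j, Measurable fun ω => A ω i j)
    (h01 : ∀ i j ω, A ω i j = 0 ∨ A ω i j = 1)
    (s : Finset (Fin n × Fin n)) : Integrable (fun ω => ∏ q ∈ s, A ω q.1 q.2) μ := by
  refine (integrable_const (1:ℝ)).mono' ?_ (Filter.Eventually.of_forall fun ω => ?_)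
  · exact (Finset.measurable_prod s fun q _ => hmeas q.1 q.2).aestronglyMeasurable
  · rw [Real.norm_eq_abs, abs_le]
    constructor
    · calc (-1:ℝ) ≤ 0 := by norm_num
        _ ≤ _ := Finset.prod_nonneg fun q _ => by rcases h01 q.1 q.2 ω with h|h <;> simp [h]
    · exact Finset.prod_le_one (fun q _ => by rcases h01 q.1 q.2 ω with h|h <;> simp [h])
        (fun q _ => by rcases h01 q.1 q.2 ω with h|h <;> simp [h])

lemma int_prod (hp0 : 0 < p)
    (hmeas : ∀ i j, Measurable fun ω => A ω i j)
    (h01 : ∀ i j ω, A ω i j = 0 ∨ A ω i j = 1)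
    (hsingle : ∀ i j, ∫ ω, A ω i j ∂μ = p)
    (hind : iIndepFun
      (fun (q : Fin n × Fin n) => fun ω => A ω q.1 q.2) μ)
    (T : Finset (Fin n × Fin n)) :
    ∫ ω, ∏ q ∈ T, A ω q.1 q.2 ∂μ = p ^ T.card := by
  classical
  induction T using Finset.induction_on with
  | empty => simp
  | @insert q T hq ih =>
    have hIF : IndepFun (∏ j ∈ T, (fun ω => A ω j.1 j.2)) (fun ω => A ω q.1 q.2) μ :=
      hind.indepFun_finset_prod_of_notMem (fun q => hmeas q.1 q.2) hq
    have heq : (∏ j ∈ T, (fun ω => A ω j.1 j.2)) = fun ω => ∏ j ∈ T, A ω j.1 j.2 := by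
      funext ω; simp
    rw [Finset.card_insert_of_notMem hq]
    have hrw : (fun ω => ∏ j ∈ insert q T, A ω j.1 j.2)
        = fun ω => (∏ j ∈ T, A ω j.1 j.2) * A ω q.1 q.2 := by
      funext ω; rw [Finset.prod_insert hq, mul_comm]
    rw [hrw]
    rw [heq] at hIF
    have hi1 : Integrable (fun ω => A ω q.1 q.2) μ :=
      (intT hmeas h01 {q}).congr (Filter.Eventually.of_forall fun ω => by simp)
    have hmul := hIF.integral_fun_mul_eq_mul_integral (intT hmeas h01 T).aestronglyMeasurable hi1.aestronglyMeasurable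
    rw [ih, hsingle] at hmul
    rw [pow_succ]
    exact hmul

lemma int_ZZ (hp0 : 0 < p)
    (hmeas : ∀ i j, Measurable fun ω => A ω i j)
    (h01 : ∀ i j ω, A ω i j = 0 ∨ A ω i j = 1)
    (hsingle : ∀ i j, ∫ ω, A ω i j ∂μ = p)
    (hind : iIndepFun
      (fun (q : Fin n × Fin n) => fun ω => A ω q.1 q.2) μ)
    (i j k l : Fin n) :
    ∫ ω, (∑ r, A ω r i * A ω r j)^2 * (∑ r, A ω r k * A ω r l)^2 ∂μ
      = ∑ r1 : Fin n, ∑ r2 : Fin n, ∑ r3 : Fin n, ∑ r4 : Fin n,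
          p ^ (T8 r1 r2 r3 r4 i j k l).card := by
  have hpt : ∀ ω, (∑ r, A ω r i * A ω r j)^2 * (∑ r, A ω r k * A ω r l)^2
      = ∑ r1 : Fin n, ∑ r2 : Fin n, ∑ r3 : Fin n, ∑ r4 : Fin n,
          ∏ q ∈ T8 r1 r2 r3 r4 i j k l, A ω q.1 q.2 := by
    intro ω
    rw [mul_comm, sq, sq]
    simp only [Finset.sum_mul, Finset.mul_sum]
    refine Finset.sum_congr rfl fun r1 _ => Finset.sum_congr rfl fun r2 _ =>
      Finset.sum_congr rfl fun r3 _ => Finset.sum_congr rfl fun r4 _ => ?_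
    rw [T8perm, prod01_eight (fun q : Fin n × Fin n => A ω q.1 q.2)
      (fun q => h01 q.1 q.2 ω) (r2,i) (r2,j) (r1,i) (r1,j) (r4,k) (r4,l) (r3,k) (r3,l)]
    ring
  rw [show (fun ω => (∑ r, A ω r i * A ω r j)^2 * (∑ r, A ω r k * A ω r l)^2)
      = fun ω => ∑ r1 : Fin n, ∑ r2 : Fin n, ∑ r3 : Fin n, ∑ r4 : Fin n,
          ∏ q ∈ T8 r1 r2 r3 r4 i j k l, A ω q.1 q.2 from funext hpt]
  rw [integral_finset_sum _ (fun r1 _ => integrable_finset_sum _ (fun r2 _ =>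
    integrable_finset_sum _ (fun r3 _ => integrable_finset_sum _ (fun r4 _ =>
      intT hmeas h01 _))))]
  refine Finset.sum_congr rfl fun r1 _ => ?_
  rw [integral_finset_sum _ (fun r2 _ => integrable_finset_sum _ (fun r3 _ =>
    integrable_finset_sum _ (fun r4 _ => intT hmeas h01 _)))]
  refine Finset.sum_congr rfl fun r2 _ => ?_
  rw [integral_finset_sum _ (fun r3 _ => integrable_finset_sum _ (fun r4 _ =>
    intT hmeas h01 _))]
  refine Finset.sum_congr rfl fun r3 _ => ?_
  rw [integral_finset_sum _ (fun r4 _ => intT hmeas h01 _)]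
  exact Finset.sum_congr rfl fun r4 _ => int_prod hp0 hmeas h01 hsingle hind _
end

section Main
variable {Ω : Type} [mΩ : MeasurableSpace Ω] {μ : Measure Ω} [IsProbabilityMeasure μ]
  {n : ℕ} {p : ℝ} {A : Ω → Matrix (Fin n) (Fin n) ℝ}

lemma int_single (hp0 : 0 < p) (hmeas : ∀ i j, Measurable fun ω => A ω i j)
    (hber : ∀ i j, IsBernoulli μ (fun ω => A ω i j) p) (i j : Fin n) :
    ∫ ω, A ω i j ∂μ = p := by
  obtain ⟨h01, hp⟩ := hber i j
  have hset : MeasurableSet {ω | A ω i j = 1} := (hmeas i j) (measurableSet_singleton 1)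
  have : (fun ω => A ω i j) = Set.indicator {ω | A ω i j = 1} (fun _ => (1:ℝ)) := by
    funext ω
    rcases h01 ω with h | h <;> simp [Set.indicator, h]
  rw [this, integral_indicator_const _ hset, measureReal_def, show μ {ω | A ω i j = 1} = ENNReal.ofReal p from hp]
  simp [ENNReal.toReal_ofReal hp0.le]

lemma indepZ (hmeas : ∀ i j, Measurable fun ω => A ω i j)
    (hind : iIndepFun
      (fun (q : Fin n × Fin n) => fun ω => A ω q.1 q.2) μ)
    (i j k l : Fin n) (hik : i ≠ k) (hil : i ≠ l) (hjk : j ≠ k) (hjl : j ≠ l) :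
    IndepFun (fun ω => (∑ r, A ω r i * A ω r j)^2) (fun ω => (∑ r, A ω r k * A ω r l)^2) μ := by
  classical
  set S : Finset (Fin n × Fin n) := Finset.univ ×ˢ {i, j} with hS
  set T : Finset (Fin n × Fin n) := Finset.univ ×ˢ {k, l} with hT
  have hST : Disjoint S T := by
    rw [Finset.disjoint_left]
    rintro ⟨r, c⟩ hS hT
    simp only [S, T, Finset.mem_product, Finset.mem_insert, Finset.mem_singleton] at hS hT
    rcases hS.2 with rfl | rfl <;> rcases hT.2 with h | h <;> simp_all
  have hbase := hind.indepFun_finset S T hST (fun q => hmeas q.1 q.2)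
  have hmemSi : ∀ r : Fin n, ((r, i) : Fin n × Fin n) ∈ S := by intro r; simp [S]
  have hmemSj : ∀ r : Fin n, ((r, j) : Fin n × Fin n) ∈ S := by intro r; simp [S]
  have hmemTk : ∀ r : Fin n, ((r, k) : Fin n × Fin n) ∈ T := by intro r; simp [T]
  have hmemTl : ∀ r : Fin n, ((r, l) : Fin n × Fin n) ∈ T := by intro r; simp [T]
  let φS : ((x : S) → ℝ) → ℝ := fun g => (∑ r, g ⟨(r, i), hmemSi r⟩ * g ⟨(r, j), hmemSj r⟩)^2
  let φT : ((x : T) → ℝ) → ℝ := fun g => (∑ r, g ⟨(r, k), hmemTk r⟩ * g ⟨(r, l), hmemTl r⟩)^2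
  have hφS : Measurable φS := by
    apply Measurable.pow_const
    exact Finset.measurable_sum _ fun r _ =>
      (measurable_pi_apply _).mul (measurable_pi_apply _)
  have hφT : Measurable φT := by
    apply Measurable.pow_const
    exact Finset.measurable_sum _ fun r _ =>
      (measurable_pi_apply _).mul (measurable_pi_apply _)
  exact hbase.comp hφS hφT

end Main

/-- The dominating function for covariance terms. -/
def Bfun (n : ℕ) (p : ℝ) (q q' : Fin n × Fin n) : ℝ :=
  (if q.1 = q.2 ∧ q'.1 = q'.2 ∧ q.1 = q'.1 then 24*((n:ℝ)*p)^4 else 0)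
  + (if (q.1 = q.2 ∧ q'.1 ≠ q'.2 ∧ (q.1 = q'.1 ∨ q.1 = q'.2))
      ∨ (q'.1 = q'.2 ∧ q.1 ≠ q.2 ∧ (q'.1 = q.1 ∨ q'.1 = q.2))
      then 6*((n:ℝ)*p)^3*p + 24*((n:ℝ)*p)^4*p^2 else 0)
  + (if q.1 ≠ q.2 ∧ ((q'.1 = q.1 ∧ q'.2 = q.2) ∨ (q'.1 = q.2 ∧ q'.2 = q.1))
      then 24*((n:ℝ)*p^2 + ((n:ℝ)*p^2)^4) else 0)
  + (if q.1 ≠ q.2 ∧ q'.1 ≠ q'.2 ∧ ¬((q'.1 = q.1 ∧ q'.2 = q.2) ∨ (q'.1 = q.2 ∧ q'.2 = q.1))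
        ∧ (q.1 = q'.1 ∨ q.1 = q'.2 ∨ q.2 = q'.1 ∨ q.2 = q'.2)
      then 2*((n:ℝ)*p)^2*p^2 + 12*((n:ℝ)*p)^3*p^3 + 24*((n:ℝ)*p)^4*p^4 else 0)

lemma ite_nonneg' {c : Prop} [Decidable c] {V : ℝ} (hV : 0 ≤ V) :
    0 ≤ (if c then V else 0) := by split_ifs <;> simp [hV]

section BfunFacts
variable {n : ℕ} {p : ℝ}

lemma V1nn (hp : 0 ≤ p) : (0:ℝ) ≤ 24*((n:ℝ)*p)^4 := by positivity
lemma V2nn (hp : 0 ≤ p) : (0:ℝ) ≤ 6*((n:ℝ)*p)^3*p + 24*((n:ℝ)*p)^4*p^2 := by positivity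
lemma V3nn (hp : 0 ≤ p) : (0:ℝ) ≤ 24*((n:ℝ)*p^2 + ((n:ℝ)*p^2)^4) := by positivity
lemma V4nn (hp : 0 ≤ p) :
    (0:ℝ) ≤ 2*((n:ℝ)*p)^2*p^2 + 12*((n:ℝ)*p)^3*p^3 + 24*((n:ℝ)*p)^4*p^4 := by positivity

lemma Bfun_nonneg (hp : 0 ≤ p) (q q' : Fin n × Fin n) : 0 ≤ Bfun n p q q' := by
  unfold Bfun
  have := V1nn (n := n) hp
  have := V2nn (n := n) hp
  have := V3nn (n := n) hp
  have := V4nn (n := n) hp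
  have h1 := ite_nonneg' (c := q.1 = q.2 ∧ q'.1 = q'.2 ∧ q.1 = q'.1) (V1nn (n := n) hp)
  positivity

lemma Bfun_ge1 (hp : 0 ≤ p) (q q' : Fin n × Fin n)
    (hc : q.1 = q.2 ∧ q'.1 = q'.2 ∧ q.1 = q'.1) :
    24*((n:ℝ)*p)^4 ≤ Bfun n p q q' := by
  unfold Bfun
  rw [if_pos hc]
  have h2 := ite_nonneg' (c := (q.1 = q.2 ∧ q'.1 ≠ q'.2 ∧ (q.1 = q'.1 ∨ q.1 = q'.2))
      ∨ (q'.1 = q'.2 ∧ q.1 ≠ q.2 ∧ (q'.1 = q.1 ∨ q'.1 = q.2))) (V2nn (n := n) hp)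
  have h3 := ite_nonneg' (c := q.1 ≠ q.2 ∧ ((q'.1 = q.1 ∧ q'.2 = q.2) ∨ (q'.1 = q.2 ∧ q'.2 = q.1)))
    (V3nn (n := n) hp)
  have h4 := ite_nonneg' (c := q.1 ≠ q.2 ∧ q'.1 ≠ q'.2
      ∧ ¬((q'.1 = q.1 ∧ q'.2 = q.2) ∨ (q'.1 = q.2 ∧ q'.2 = q.1))
      ∧ (q.1 = q'.1 ∨ q.1 = q'.2 ∨ q.2 = q'.1 ∨ q.2 = q'.2)) (V4nn (n := n) hp)
  linarith

lemma Bfun_ge2 (hp : 0 ≤ p) (q q' : Fin n × Fin n)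
    (hc : (q.1 = q.2 ∧ q'.1 ≠ q'.2 ∧ (q.1 = q'.1 ∨ q.1 = q'.2))
      ∨ (q'.1 = q'.2 ∧ q.1 ≠ q.2 ∧ (q'.1 = q.1 ∨ q'.1 = q.2))) :
    6*((n:ℝ)*p)^3*p + 24*((n:ℝ)*p)^4*p^2 ≤ Bfun n p q q' := by
  unfold Bfun
  rw [if_pos hc]
  have h1 := ite_nonneg' (c := q.1 = q.2 ∧ q'.1 = q'.2 ∧ q.1 = q'.1) (V1nn (n := n) hp)
  have h3 := ite_nonneg' (c := q.1 ≠ q.2 ∧ ((q'.1 = q.1 ∧ q'.2 = q.2) ∨ (q'.1 = q.2 ∧ q'.2 = q.1)))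
    (V3nn (n := n) hp)
  have h4 := ite_nonneg' (c := q.1 ≠ q.2 ∧ q'.1 ≠ q'.2
      ∧ ¬((q'.1 = q.1 ∧ q'.2 = q.2) ∨ (q'.1 = q.2 ∧ q'.2 = q.1))
      ∧ (q.1 = q'.1 ∨ q.1 = q'.2 ∨ q.2 = q'.1 ∨ q.2 = q'.2)) (V4nn (n := n) hp)
  linarith

lemma Bfun_ge3 (hp : 0 ≤ p) (q q' : Fin n × Fin n)
    (hc : q.1 ≠ q.2 ∧ ((q'.1 = q.1 ∧ q'.2 = q.2) ∨ (q'.1 = q.2 ∧ q'.2 = q.1))) :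
    24*((n:ℝ)*p^2 + ((n:ℝ)*p^2)^4) ≤ Bfun n p q q' := by
  unfold Bfun
  rw [if_pos hc]
  have h1 := ite_nonneg' (c := q.1 = q.2 ∧ q'.1 = q'.2 ∧ q.1 = q'.1) (V1nn (n := n) hp)
  have h2 := ite_nonneg' (c := (q.1 = q.2 ∧ q'.1 ≠ q'.2 ∧ (q.1 = q'.1 ∨ q.1 = q'.2))
      ∨ (q'.1 = q'.2 ∧ q.1 ≠ q.2 ∧ (q'.1 = q.1 ∨ q'.1 = q.2))) (V2nn (n := n) hp)
  have h4 := ite_nonneg' (c := q.1 ≠ q.2 ∧ q'.1 ≠ q'.2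
      ∧ ¬((q'.1 = q.1 ∧ q'.2 = q.2) ∨ (q'.1 = q.2 ∧ q'.2 = q.1))
      ∧ (q.1 = q'.1 ∨ q.1 = q'.2 ∨ q.2 = q'.1 ∨ q.2 = q'.2)) (V4nn (n := n) hp)
  linarith

lemma Bfun_ge4 (hp : 0 ≤ p) (q q' : Fin n × Fin n)
    (hc : q.1 ≠ q.2 ∧ q'.1 ≠ q'.2 ∧ ¬((q'.1 = q.1 ∧ q'.2 = q.2) ∨ (q'.1 = q.2 ∧ q'.2 = q.1))
      ∧ (q.1 = q'.1 ∨ q.1 = q'.2 ∨ q.2 = q'.1 ∨ q.2 = q'.2)) :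
    2*((n:ℝ)*p)^2*p^2 + 12*((n:ℝ)*p)^3*p^3 + 24*((n:ℝ)*p)^4*p^4 ≤ Bfun n p q q' := by
  unfold Bfun
  rw [if_pos hc]
  have h1 := ite_nonneg' (c := q.1 = q.2 ∧ q'.1 = q'.2 ∧ q.1 = q'.1) (V1nn (n := n) hp)
  have h2 := ite_nonneg' (c := (q.1 = q.2 ∧ q'.1 ≠ q'.2 ∧ (q.1 = q'.1 ∨ q.1 = q'.2))
      ∨ (q'.1 = q'.2 ∧ q.1 ≠ q.2 ∧ (q'.1 = q.1 ∨ q'.1 = q.2))) (V2nn (n := n) hp)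
  have h3 := ite_nonneg' (c := q.1 ≠ q.2 ∧ ((q'.1 = q.1 ∧ q'.2 = q.2) ∨ (q'.1 = q.2 ∧ q'.2 = q.1)))
    (V3nn (n := n) hp)
  linarith

end BfunFacts
section Termwise
variable {Ω : Type} [mΩ : MeasurableSpace Ω] {μ : Measure Ω} [IsProbabilityMeasure μ]
  {n : ℕ} {p : ℝ} {A : Ω → Matrix (Fin n) (Fin n) ℝ}

lemma Zmeas (hmeas : ∀ i j, Measurable fun ω => A ω i j) (i j : Fin n) :
    Measurable (fun ω => (∑ r, A ω r i * A ω r j)^2) :=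
  (Finset.measurable_sum _ fun r _ => (hmeas r i).mul (hmeas r j)).pow_const 2

lemma Ynonneg (h01 : ∀ i j ω, A ω i j = 0 ∨ A ω i j = 1) (i j : Fin n) (ω : Ω) :
    0 ≤ ∑ r, A ω r i * A ω r j :=
  Finset.sum_nonneg fun r _ => mul_nonneg
    (by rcases h01 r i ω with h|h <;> simp [h]) (by rcases h01 r j ω with h|h <;> simp [h])

lemma Yle (h01 : ∀ i j ω, A ω i j = 0 ∨ A ω i j = 1) (i j : Fin n) (ω : Ω) :
    ∑ r, A ω r i * A ω r j ≤ (n:ℝ) := by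
  calc ∑ r, A ω r i * A ω r j ≤ ∑ _r : Fin n, (1:ℝ) := by
        refine Finset.sum_le_sum fun r _ => ?_
        have h1 : A ω r i ≤ 1 := by rcases h01 r i ω with h|h <;> simp [h]
        have h2 : A ω r j ≤ 1 := by rcases h01 r j ω with h|h <;> simp [h]
        have h3 : 0 ≤ A ω r i := by rcases h01 r i ω with h|h <;> simp [h]
        have h4 : 0 ≤ A ω r j := by rcases h01 r j ω with h|h <;> simp [h]
        nlinarith
    _ = (n:ℝ) := by simp
  
lemma Zint (hmeas : ∀ i j, Measurable fun ω => A ω i j)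
    (h01 : ∀ i j ω, A ω i j = 0 ∨ A ω i j = 1) (i j : Fin n) :
    Integrable (fun ω => (∑ r, A ω r i * A ω r j)^2) μ := by
  refine (integrable_const ((n:ℝ)^2)).mono' (Zmeas hmeas i j).aestronglyMeasurable
    (Filter.Eventually.of_forall fun ω => ?_)
  rw [Real.norm_eq_abs, abs_of_nonneg (sq_nonneg _)]
  have h0 := Ynonneg h01 i j ω
  have h1 := Yle h01 i j ω
  nlinarith

lemma ZZint (hmeas : ∀ i j, Measurable fun ω => A ω i j)
    (h01 : ∀ i j ω, A ω i j = 0 ∨ A ω i j = 1) (i j k l : Fin n) :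
    Integrable (fun ω => (∑ r, A ω r i * A ω r j)^2 * (∑ r, A ω r k * A ω r l)^2) μ := by
  refine (integrable_const ((n:ℝ)^4)).mono'
    ((Zmeas hmeas i j).mul (Zmeas hmeas k l)).aestronglyMeasurable
    (Filter.Eventually.of_forall fun ω => ?_)
  rw [Real.norm_eq_abs, abs_of_nonneg (mul_nonneg (sq_nonneg _) (sq_nonneg _))]
  have h0 := Ynonneg h01 i j ω
  have h1 := Yle h01 i j ω
  have h2 := Ynonneg h01 k l ω
  have h3 := Yle h01 k l ω
  have h4 : (∑ r, A ω r i * A ω r j) * (∑ r, A ω r k * A ω r l) ≤ (n:ℝ)*(n:ℝ) :=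
    mul_le_mul h1 h3 h2 (le_trans h0 h1)
  have h5 : 0 ≤ (∑ r, A ω r i * A ω r j) * (∑ r, A ω r k * A ω r l) :=
    mul_nonneg h0 h2
  nlinarith [h4, h5]

lemma termwise (hp0 : 0 < p) (hp1 : p ≤ 1) (hnp : 1 ≤ (n:ℝ)*p)
    (hmeas : ∀ i j, Measurable fun ω => A ω i j)
    (h01 : ∀ i j ω, A ω i j = 0 ∨ A ω i j = 1)
    (hsingle : ∀ i j, ∫ ω, A ω i j ∂μ = p)
    (hind : iIndepFun
      (fun (q : Fin n × Fin n) => fun ω => A ω q.1 q.2) μ)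
    (q q' : Fin n × Fin n) :
    (∫ ω, (∑ r, A ω r q.1 * A ω r q.2)^2 * (∑ r, A ω r q'.1 * A ω r q'.2)^2 ∂μ)
      - (∫ ω, (∑ r, A ω r q.1 * A ω r q.2)^2 ∂μ)
        * (∫ ω, (∑ r, A ω r q'.1 * A ω r q'.2)^2 ∂μ)
      ≤ Bfun n p q q' := by
  obtain ⟨i, j⟩ := q
  obtain ⟨k, l⟩ := q'
  dsimp only
  have hflip : ∀ a b c d : Fin n,
      (∫ ω, (∑ r, A ω r a * A ω r b)^2 * (∑ r, A ω r c * A ω r d)^2 ∂μ)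
        = ∫ ω, (∑ r, A ω r c * A ω r d)^2 * (∑ r, A ω r a * A ω r b)^2 ∂μ :=
    fun a b c d => congrArg (integral μ) (funext fun ω => mul_comm _ _)
  have hsw1 : ∀ a b c d : Fin n,
      (∫ ω, (∑ r, A ω r a * A ω r b)^2 * (∑ r, A ω r c * A ω r d)^2 ∂μ)
        = ∫ ω, (∑ r, A ω r b * A ω r a)^2 * (∑ r, A ω r c * A ω r d)^2 ∂μ :=
    fun a b c d => congrArg (integral μ) (funext fun ω => by
      rw [show (∑ r, A ω r a * A ω r b) = ∑ r, A ω r b * A ω r a from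
        Finset.sum_congr rfl fun r _ => mul_comm _ _])
  have hsw2 : ∀ a b c d : Fin n,
      (∫ ω, (∑ r, A ω r a * A ω r b)^2 * (∑ r, A ω r c * A ω r d)^2 ∂μ)
        = ∫ ω, (∑ r, A ω r a * A ω r b)^2 * (∑ r, A ω r d * A ω r c)^2 ∂μ :=
    fun a b c d => congrArg (integral μ) (funext fun ω => by
      rw [show (∑ r, A ω r c * A ω r d) = ∑ r, A ω r d * A ω r c from
        Finset.sum_congr rfl fun r _ => mul_comm _ _])
  by_cases hsh : i = k ∨ i = l ∨ j = k ∨ j = l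
  swap
  · -- disjoint: covariance is zero
    push_neg at hsh
    obtain ⟨hik, hil, hjk, hjl⟩ := hsh
    have hIF := indepZ hmeas hind i j k l hik hil hjk hjl
    have h0 : (∫ ω, (∑ r, A ω r i * A ω r j)^2 * (∑ r, A ω r k * A ω r l)^2 ∂μ)
        = (∫ ω, (∑ r, A ω r i * A ω r j)^2 ∂μ) * (∫ ω, (∑ r, A ω r k * A ω r l)^2 ∂μ) :=
      hIF.integral_fun_mul_eq_mul_integral (Zint hmeas h01 i j).aestronglyMeasurable (Zint hmeas h01 k l).aestronglyMeasurable
    rw [h0, sub_self]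
    exact Bfun_nonneg hp0.le _ _
  · have hZnn1 : 0 ≤ ∫ ω, (∑ r, A ω r i * A ω r j)^2 ∂μ :=
      integral_nonneg fun ω => sq_nonneg _
    have hZnn2 : 0 ≤ ∫ ω, (∑ r, A ω r k * A ω r l)^2 ∂μ :=
      integral_nonneg fun ω => sq_nonneg _
    have hub : (∫ ω, (∑ r, A ω r i * A ω r j)^2 * (∑ r, A ω r k * A ω r l)^2 ∂μ)
        - (∫ ω, (∑ r, A ω r i * A ω r j)^2 ∂μ) * (∫ ω, (∑ r, A ω r k * A ω r l)^2 ∂μ)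
        ≤ ∫ ω, (∑ r, A ω r i * A ω r j)^2 * (∑ r, A ω r k * A ω r l)^2 ∂μ := by
      nlinarith [mul_nonneg hZnn1 hZnn2]
    refine le_trans hub ?_
    by_cases hij : i = j
    · by_cases hkl : k = l
      · -- both diagonal; shared gives i = k
        subst hij; subst hkl
        have hik : i = k := by tauto
        subst hik
        rw [int_ZZ hp0 hmeas h01 hsingle hind i i i i]
        exact le_trans (typeB1sum hp0 hnp i) (Bfun_ge1 hp0.le _ _ ⟨rfl, rfl, rfl⟩)
      · -- q diagonal, q' off-diagonal
        subst hij
        have hcase : i = k ∨ i = l := by tauto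
        have hcond : ((i,i) : Fin n × Fin n).1 = (i,i).2
            ∧ ((k,l) : Fin n × Fin n).1 ≠ (k,l).2 ∧ ((i,i).1 = (k,l).1 ∨ (i,i).1 = (k,l).2) :=
          ⟨rfl, hkl, by tauto⟩
        rcases hcase with rfl | rfl
        · -- i = k
          rw [int_ZZ hp0 hmeas h01 hsingle hind i i i l]
          refine le_trans (typeB2sum hp0 hp1 hnp i l hkl) ?_
          exact Bfun_ge2 hp0.le _ _ (Or.inl hcond)
        · -- i = l
          rw [hsw2, int_ZZ hp0 hmeas h01 hsingle hind i i i k]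
          refine le_trans (typeB2sum hp0 hp1 hnp i k (by rintro rfl; simp_all)) ?_
          exact Bfun_ge2 hp0.le _ _ (Or.inl hcond)
    · by_cases hkl : k = l
      · -- q off-diagonal, q' diagonal
        subst hkl
        have hcase : k = i ∨ k = j := by tauto
        have hcond : ((k,k) : Fin n × Fin n).1 = (k,k).2
            ∧ ((i,j) : Fin n × Fin n).1 ≠ (i,j).2 ∧ ((k,k).1 = (i,j).1 ∨ (k,k).1 = (i,j).2) :=
          ⟨rfl, hij, by tauto⟩
        rw [hflip]
        rcases hcase with rfl | rfl
        · rw [int_ZZ hp0 hmeas h01 hsingle hind k k k j]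
          refine le_trans (typeB2sum hp0 hp1 hnp k j hij) ?_
          exact Bfun_ge2 hp0.le _ _ (Or.inr hcond)
        · rw [hsw2, int_ZZ hp0 hmeas h01 hsingle hind k k k i]
          refine le_trans (typeB2sum hp0 hp1 hnp k i (by rintro rfl; simp_all)) ?_
          exact Bfun_ge2 hp0.le _ _ (Or.inr hcond)
      · by_cases heq : (k = i ∧ l = j) ∨ (k = j ∧ l = i)
        · -- same unordered pair
          have hc3 : ((i,j) : Fin n × Fin n).1 ≠ (i,j).2
              ∧ ((((k,l) : Fin n × Fin n).1 = (i,j).1 ∧ (k,l).2 = (i,j).2)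
                ∨ ((k,l).1 = (i,j).2 ∧ (k,l).2 = (i,j).1)) := ⟨hij, by tauto⟩
          rcases heq with ⟨rfl, rfl⟩ | ⟨rfl, rfl⟩
          · rw [int_ZZ hp0 hmeas h01 hsingle hind k l k l]
            exact le_trans (typeB3sum hp0 k l hkl) (Bfun_ge3 hp0.le _ _ hc3)
          · rw [hsw2, int_ZZ hp0 hmeas h01 hsingle hind l k l k]
            exact le_trans (typeB3sum hp0 l k hij) (Bfun_ge3 hp0.le _ _ hc3)
        · -- share exactly one index
          have hc4 : ((i,j) : Fin n × Fin n).1 ≠ (i,j).2 ∧ ((k,l) : Fin n × Fin n).1 ≠ (k,l).2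
              ∧ ¬((((k,l) : Fin n × Fin n).1 = (i,j).1 ∧ (k,l).2 = (i,j).2)
                  ∨ ((k,l).1 = (i,j).2 ∧ (k,l).2 = (i,j).1))
              ∧ ((i,j).1 = (k,l).1 ∨ (i,j).1 = (k,l).2 ∨ (i,j).2 = (k,l).1 ∨ (i,j).2 = (k,l).2) :=
            ⟨hij, hkl, by tauto, by tauto⟩
          have hfinish : ∀ x : ℝ,
              x ≤ 2*((n:ℝ)*p)^2*p^2 + 12*((n:ℝ)*p)^3*p^3 + 24*((n:ℝ)*p)^4*p^4 →
              x ≤ Bfun n p (i,j) (k,l) := fun x hx =>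
            le_trans hx (Bfun_ge4 hp0.le _ _ hc4)
          rcases hsh with rfl | rfl | rfl | rfl
          · -- i = k
            have h1 : i ≠ l := by rintro rfl; simp_all
            have h2 : j ≠ l := by rintro rfl; simp_all
            rw [int_ZZ hp0 hmeas h01 hsingle hind i j i l]
            exact hfinish _ (typeB4sum hp0 hp1 hnp i j l hij h1 h2)
          · -- i = l
            have h1 : i ≠ k := by rintro rfl; simp_all
            have h2 : j ≠ k := by rintro rfl; simp_all
            rw [hsw2, int_ZZ hp0 hmeas h01 hsingle hind i j i k]
            exact hfinish _ (typeB4sum hp0 hp1 hnp i j k hij h1 h2)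
          · -- j = k
            have h1 : j ≠ i := by rintro rfl; simp_all
            have h2 : j ≠ l := hkl
            have h3 : i ≠ l := by rintro rfl; simp_all
            rw [hsw1, int_ZZ hp0 hmeas h01 hsingle hind j i j l]
            exact hfinish _ (typeB4sum hp0 hp1 hnp j i l h1 h2 h3)
          · -- j = l
            have h1 : j ≠ i := by rintro rfl; simp_all
            have h2 : j ≠ k := by rintro rfl; simp_all
            have h3 : i ≠ k := by rintro rfl; simp_all
            rw [hsw1, hsw2, int_ZZ hp0 hmeas h01 hsingle hind j i j k]
            exact hfinish _ (typeB4sum hp0 hp1 hnp j i k h1 h2 h3)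

end Termwise

section Counting

lemma sum_ite_le {α : Type*} [Fintype α] (P : α → Prop) [DecidablePred P] {V : ℝ}
    (hV : 0 ≤ V) (s : Finset α) (hs : ∀ x, P x → x ∈ s) {m : ℕ} (hm : s.card ≤ m) :
    (∑ x : α, if P x then V else 0) ≤ (m:ℝ) * V := by
  rw [Finset.sum_ite, Finset.sum_const_zero, add_zero, Finset.sum_const, nsmul_eq_mul]
  have h1 : (Finset.univ.filter P).card ≤ m :=
    le_trans (Finset.card_le_card fun x hx => hs x (Finset.mem_filter.mp hx).2) hm
  exact mul_le_mul_of_nonneg_right (by exact_mod_cast h1) hV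

variable {n : ℕ} {p : ℝ}

lemma Bsum (hp0 : 0 < p) :
    ∑ q : Fin n × Fin n, ∑ q' : Fin n × Fin n, Bfun n p q q'
      ≤ (n:ℝ) * (24*((n:ℝ)*p)^4)
        + (4*(n:ℝ)^2) * (6*((n:ℝ)*p)^3*p + 24*((n:ℝ)*p)^4*p^2)
        + (2*(n:ℝ)^2) * (24*((n:ℝ)*p^2 + ((n:ℝ)*p^2)^4))
        + (4*(n:ℝ)^3) * (2*((n:ℝ)*p)^2*p^2 + 12*((n:ℝ)*p)^3*p^3 + 24*((n:ℝ)*p)^4*p^4) := by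
  classical
  have hconv : ∑ x : (Fin n × Fin n) × (Fin n × Fin n), Bfun n p x.1 x.2
      = ∑ q : Fin n × Fin n, ∑ q' : Fin n × Fin n, Bfun n p q q' := by
    rw [← Finset.univ_product_univ, Finset.sum_product]
  rw [← hconv]
  unfold Bfun
  rw [Finset.sum_add_distrib, Finset.sum_add_distrib, Finset.sum_add_distrib]
  have e1 : (∑ x : (Fin n × Fin n) × (Fin n × Fin n),
      if x.1.1 = x.1.2 ∧ x.2.1 = x.2.2 ∧ x.1.1 = x.2.1 then 24*((n:ℝ)*p)^4 else 0)
      ≤ (n:ℝ) * (24*((n:ℝ)*p)^4) := by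
    refine sum_ite_le _ (V1nn (n := n) hp0.le)
      (Finset.univ.image (fun a : Fin n => (((a,a) : Fin n × Fin n), ((a,a) : Fin n × Fin n))))
      ?_ (le_trans Finset.card_image_le (by simp))
    rintro ⟨⟨i,j⟩,⟨k,l⟩⟩ ⟨h1, h2, h3⟩
    dsimp only at h1 h2 h3
    subst h1; subst h2; subst h3
    exact Finset.mem_image_of_mem _ (Finset.mem_univ i)
  have e2 : (∑ x : (Fin n × Fin n) × (Fin n × Fin n),
      if (x.1.1 = x.1.2 ∧ x.2.1 ≠ x.2.2 ∧ (x.1.1 = x.2.1 ∨ x.1.1 = x.2.2))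
        ∨ (x.2.1 = x.2.2 ∧ x.1.1 ≠ x.1.2 ∧ (x.2.1 = x.1.1 ∨ x.2.1 = x.1.2))
        then 6*((n:ℝ)*p)^3*p + 24*((n:ℝ)*p)^4*p^2 else 0)
      ≤ ((n*n + (n*n + (n*n + n*n)) : ℕ):ℝ) * (6*((n:ℝ)*p)^3*p + 24*((n:ℝ)*p)^4*p^2) := by
    set f1 := fun t : Fin n × Fin n => (((t.1, t.1) : Fin n × Fin n), ((t.1, t.2) : Fin n × Fin n))
    set f2 := fun t : Fin n × Fin n => (((t.1, t.1) : Fin n × Fin n), ((t.2, t.1) : Fin n × Fin n))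
    set f3 := fun t : Fin n × Fin n => (((t.1, t.2) : Fin n × Fin n), ((t.1, t.1) : Fin n × Fin n))
    set f4 := fun t : Fin n × Fin n => (((t.1, t.2) : Fin n × Fin n), ((t.2, t.2) : Fin n × Fin n))
    refine sum_ite_le _ (V2nn (n := n) hp0.le)
      (Finset.univ.image f1 ∪ (Finset.univ.image f2 ∪ (Finset.univ.image f3 ∪ Finset.univ.image f4)))
      ?_ ?_
    · rintro ⟨⟨i,j⟩,⟨k,l⟩⟩ hx
      dsimp only at hx
      rcases hx with ⟨h1, h2, h3 | h3⟩ | ⟨h1, h2, h3 | h3⟩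
      · subst h1; subst h3
        exact Finset.mem_union_left _ (Finset.mem_image_of_mem _ (Finset.mem_univ (i, l)))
      · subst h1; subst h3
        exact Finset.mem_union_right _ (Finset.mem_union_left _
          (Finset.mem_image_of_mem _ (Finset.mem_univ (i, k))))
      · subst h1; subst h3
        exact Finset.mem_union_right _ (Finset.mem_union_right _ (Finset.mem_union_left _
          (Finset.mem_image_of_mem _ (Finset.mem_univ (k, j)))))
      · subst h1; subst h3
        exact Finset.mem_union_right _ (Finset.mem_union_right _ (Finset.mem_union_right _
          (Finset.mem_image_of_mem _ (Finset.mem_univ (i, k)))))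
    · refine le_trans (Finset.card_union_le _ _) (add_le_add
        (le_trans Finset.card_image_le (by simp))
        (le_trans (Finset.card_union_le _ _) (add_le_add
          (le_trans Finset.card_image_le (by simp))
          (le_trans (Finset.card_union_le _ _) (add_le_add
            (le_trans Finset.card_image_le (by simp))
            (le_trans Finset.card_image_le (by simp)))))))
  have e3 : (∑ x : (Fin n × Fin n) × (Fin n × Fin n),
      if x.1.1 ≠ x.1.2 ∧ ((x.2.1 = x.1.1 ∧ x.2.2 = x.1.2) ∨ (x.2.1 = x.1.2 ∧ x.2.2 = x.1.1))
        then 24*((n:ℝ)*p^2 + ((n:ℝ)*p^2)^4) else 0)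
      ≤ ((n*n + n*n : ℕ):ℝ) * (24*((n:ℝ)*p^2 + ((n:ℝ)*p^2)^4)) := by
    set g1 := fun t : Fin n × Fin n => (((t.1, t.2) : Fin n × Fin n), ((t.1, t.2) : Fin n × Fin n))
    set g2 := fun t : Fin n × Fin n => (((t.1, t.2) : Fin n × Fin n), ((t.2, t.1) : Fin n × Fin n))
    refine sum_ite_le _ (V3nn (n := n) hp0.le)
      (Finset.univ.image g1 ∪ Finset.univ.image g2) ?_ ?_
    · rintro ⟨⟨i,j⟩,⟨k,l⟩⟩ hx
      dsimp only at hx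
      rcases hx with ⟨h1, ⟨h2, h3⟩ | ⟨h2, h3⟩⟩
      · subst h2; subst h3
        exact Finset.mem_union_left _ (Finset.mem_image_of_mem _ (Finset.mem_univ (k, l)))
      · subst h2; subst h3
        exact Finset.mem_union_right _ (Finset.mem_image_of_mem _ (Finset.mem_univ (l, k)))
    · refine le_trans (Finset.card_union_le _ _) (add_le_add
        (le_trans Finset.card_image_le (by simp))
        (le_trans Finset.card_image_le (by simp)))
  have e4 : (∑ x : (Fin n × Fin n) × (Fin n × Fin n),
      if x.1.1 ≠ x.1.2 ∧ x.2.1 ≠ x.2.2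
          ∧ ¬((x.2.1 = x.1.1 ∧ x.2.2 = x.1.2) ∨ (x.2.1 = x.1.2 ∧ x.2.2 = x.1.1))
          ∧ (x.1.1 = x.2.1 ∨ x.1.1 = x.2.2 ∨ x.1.2 = x.2.1 ∨ x.1.2 = x.2.2)
        then 2*((n:ℝ)*p)^2*p^2 + 12*((n:ℝ)*p)^3*p^3 + 24*((n:ℝ)*p)^4*p^4 else 0)
      ≤ ((n*(n*n) + (n*(n*n) + (n*(n*n) + n*(n*n))) : ℕ):ℝ)
          * (2*((n:ℝ)*p)^2*p^2 + 12*((n:ℝ)*p)^3*p^3 + 24*((n:ℝ)*p)^4*p^4) := by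
    set k1 := fun t : Fin n × Fin n × Fin n =>
      (((t.1, t.2.1) : Fin n × Fin n), ((t.1, t.2.2) : Fin n × Fin n))
    set k2 := fun t : Fin n × Fin n × Fin n =>
      (((t.1, t.2.1) : Fin n × Fin n), ((t.2.2, t.1) : Fin n × Fin n))
    set k3 := fun t : Fin n × Fin n × Fin n =>
      (((t.1, t.2.1) : Fin n × Fin n), ((t.2.1, t.2.2) : Fin n × Fin n))
    set k4 := fun t : Fin n × Fin n × Fin n =>
      (((t.1, t.2.1) : Fin n × Fin n), ((t.2.2, t.2.1) : Fin n × Fin n))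
    refine sum_ite_le _ (V4nn (n := n) hp0.le)
      (Finset.univ.image k1 ∪ (Finset.univ.image k2 ∪ (Finset.univ.image k3 ∪ Finset.univ.image k4)))
      ?_ ?_
    · rintro ⟨⟨i,j⟩,⟨k,l⟩⟩ hx
      dsimp only at hx
      rcases hx with ⟨h1, h2, h3, h4 | h4 | h4 | h4⟩
      · subst h4
        exact Finset.mem_union_left _ (Finset.mem_image_of_mem _ (Finset.mem_univ (i, j, l)))
      · subst h4
        exact Finset.mem_union_right _ (Finset.mem_union_left _
          (Finset.mem_image_of_mem _ (Finset.mem_univ (i, j, k))))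
      · subst h4
        exact Finset.mem_union_right _ (Finset.mem_union_right _ (Finset.mem_union_left _
          (Finset.mem_image_of_mem _ (Finset.mem_univ (i, j, l)))))
      · subst h4
        exact Finset.mem_union_right _ (Finset.mem_union_right _ (Finset.mem_union_right _
          (Finset.mem_image_of_mem _ (Finset.mem_univ (i, j, k)))))
    · refine le_trans (Finset.card_union_le _ _) (add_le_add
        (le_trans Finset.card_image_le (by simp))
        (le_trans (Finset.card_union_le _ _) (add_le_add
          (le_trans Finset.card_image_le (by simp))
          (le_trans (Finset.card_union_le _ _) (add_le_add
            (le_trans Finset.card_image_le (by simp))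
            (le_trans Finset.card_image_le (by simp)))))))
  have hcast1 : ((n*n + (n*n + (n*n + n*n)) : ℕ):ℝ) = 4*(n:ℝ)^2 := by push_cast; ring
  have hcast2 : ((n*n + n*n : ℕ):ℝ) = 2*(n:ℝ)^2 := by push_cast; ring
  have hcast3 : ((n*(n*n) + (n*(n*n) + (n*(n*n) + n*(n*n))) : ℕ):ℝ) = 4*(n:ℝ)^3 := by
    push_cast; ring
  rw [hcast1] at e2
  rw [hcast2] at e3
  rw [hcast3] at e4
  linarith [e1, e2, e3, e4]

end Counting

end GramAux

open GramAux in
/-- if all entries of `A` are i.i.d. Bernoulli(p) with `np ≥ 1` and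
`Ã = A/√(np)`, then `Var(‖ÃᵀÃ‖_F²) ≤ C(n + n²p² + n³p⁴)` for a universal constant `C`. -/
theorem gram_frobenius_variance_bound :
    ∃ C : ℝ, 0 < C ∧
      ∀ (Ω : Type) (mΩ : MeasurableSpace Ω) (μ : Measure Ω), IsProbabilityMeasure μ →
      ∀ (n : ℕ) (p : ℝ), 0 < p → p ≤ 1 → 1 ≤ (n : ℝ) * p →
      ∀ A : Ω → Matrix (Fin n) (Fin n) ℝ,
        (∀ i j, Measurable fun ω => A ω i j) →
        (∀ i j, IsBernoulli μ (fun ω => A ω i j) p) →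
        iIndepFun
          (fun (q : Fin n × Fin n) => fun ω => A ω q.1 q.2) μ →
        variance (fun ω => (∑ i, ∑ j, (((A ω)ᵀ * A ω) i j) ^ 2) / ((n : ℝ) * p) ^ 2) μ
          ≤ C * ((n : ℝ) + (n : ℝ) ^ 2 * p ^ 2 + (n : ℝ) ^ 3 * p ^ 4) := by
  classical
  refine ⟨10000, by norm_num, ?_⟩
  intro Ω mΩ μ hProb n p hp0 hp1 hnp A hmeas hber hind
  have h01 : ∀ i j ω, A ω i j = 0 ∨ A ω i j = 1 := fun i j ω => (hber i j).1 ω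
  have hsingle : ∀ i j, ∫ ω, A ω i j ∂μ = p := fun i j => int_single hp0 hmeas hber i j
  have hnR : (0:ℝ) ≤ (n:ℝ) := Nat.cast_nonneg n
  have hn1 : (1:ℝ) ≤ (n:ℝ) := by nlinarith [hnp, hp1, hp0.le]
  set c : ℝ := ((n:ℝ)*p)^2 with hcdef
  have hc1 : (1:ℝ) ≤ c := by rw [hcdef]; nlinarith [hnp]
  have hc0 : (0:ℝ) < c := lt_of_lt_of_le one_pos hc1
  set S : Ω → ℝ := fun ω => ∑ q : Fin n × Fin n, (∑ r, A ω r q.1 * A ω r q.2)^2 with hSdef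
  have hfeq : (fun ω => (∑ i, ∑ j, (((A ω)ᵀ * A ω) i j)^2) / c)
      = fun ω => S ω / c := by
    funext ω
    simp only [hSdef]
    congr 1
    rw [← Finset.univ_product_univ, Finset.sum_product]
    refine Finset.sum_congr rfl fun i _ => Finset.sum_congr rfl fun j _ => ?_
    congr 1
  rw [hfeq]
  have hSmeas : Measurable S := by
    simp only [hSdef]
    exact Finset.measurable_sum _ fun q _ => Zmeas hmeas q.1 q.2
  have hS0 : ∀ ω, 0 ≤ S ω := by
    intro ω
    simp only [hSdef]
    exact Finset.sum_nonneg fun q _ => sq_nonneg _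
  have hSb : ∀ ω, S ω ≤ (n:ℝ)^4 := by
    intro ω
    have hcard : (Finset.univ : Finset (Fin n × Fin n)).card = n * n := by
      simp
    simp only [hSdef]
    calc ∑ q : Fin n × Fin n, (∑ r, A ω r q.1 * A ω r q.2)^2
        ≤ ∑ _q : Fin n × Fin n, (n:ℝ)^2 := by
          refine Finset.sum_le_sum fun q _ => ?_
          have h1 := Ynonneg h01 q.1 q.2 ω
          have h2 := Yle h01 q.1 q.2 ω
          nlinarith
      _ = ((n*n : ℕ):ℝ) * (n:ℝ)^2 := by
          rw [Finset.sum_const, hcard, nsmul_eq_mul]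
      _ ≤ (n:ℝ)^4 := by push_cast; nlinarith [hnR]
  have hX2 : MemLp (fun ω => S ω / c) 2 μ := by
    refine MemLp.of_bound (hSmeas.div_const c).aestronglyMeasurable ((n:ℝ)^4)
      (Filter.Eventually.of_forall fun ω => ?_)
    rw [Real.norm_eq_abs, abs_of_nonneg (div_nonneg (hS0 ω) hc0.le)]
    calc S ω / c ≤ S ω := div_le_self (hS0 ω) hc1
      _ ≤ (n:ℝ)^4 := hSb ω
  rw [variance_eq_sub hX2]
  have hZZ : ∀ a b d e : Fin n, Integrable
      (fun ω => (∑ r, A ω r a * A ω r b)^2 * (∑ r, A ω r d * A ω r e)^2) μ :=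
    fun a b d e => ZZint hmeas h01 a b d e
  have hES : ∫ ω, S ω ∂μ
      = ∑ q : Fin n × Fin n, ∫ ω, (∑ r, A ω r q.1 * A ω r q.2)^2 ∂μ := by
    simp only [hSdef]
    exact integral_finset_sum _ fun q _ => Zint hmeas h01 q.1 q.2
  have hES2 : ∫ ω, (S ω)^2 ∂μ
      = ∑ q : Fin n × Fin n, ∑ q' : Fin n × Fin n,
          ∫ ω, (∑ r, A ω r q.1 * A ω r q.2)^2 * (∑ r, A ω r q'.1 * A ω r q'.2)^2 ∂μ := by
    have hpt : (fun ω => (S ω)^2)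
        = fun ω => ∑ q : Fin n × Fin n, ∑ q' : Fin n × Fin n,
            (∑ r, A ω r q.1 * A ω r q.2)^2 * (∑ r, A ω r q'.1 * A ω r q'.2)^2 := by
      funext ω
      simp only [hSdef]
      rw [sq, Finset.sum_mul_sum]
    rw [hpt, integral_finset_sum _ (fun q _ => integrable_finset_sum _ fun q' _ =>
      hZZ q.1 q.2 q'.1 q'.2)]
    exact Finset.sum_congr rfl fun q _ =>
      integral_finset_sum _ fun q' _ => hZZ q.1 q.2 q'.1 q'.2
  have hXsq : μ[(fun ω => S ω / c)^2] = (∫ ω, (S ω)^2 ∂μ) / c^2 := by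
    have h1 : (fun ω => S ω / c)^2 = fun ω => (S ω)^2 / c^2 := by
      funext ω
      simp [div_pow]
    rw [h1, integral_div]
  have hXm : μ[fun ω => S ω / c] = (∫ ω, S ω ∂μ) / c := integral_div c _
  rw [hXsq, hXm]
  have hsplit : (∫ ω, (S ω)^2 ∂μ) / c^2 - ((∫ ω, S ω ∂μ) / c)^2
      = ((∫ ω, (S ω)^2 ∂μ) - (∫ ω, S ω ∂μ)^2) / c^2 := by
    field_simp
  rw [hsplit]
  have hdiff : (∫ ω, (S ω)^2 ∂μ) - (∫ ω, S ω ∂μ)^2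
      = ∑ q : Fin n × Fin n, ∑ q' : Fin n × Fin n,
          ((∫ ω, (∑ r, A ω r q.1 * A ω r q.2)^2 * (∑ r, A ω r q'.1 * A ω r q'.2)^2 ∂μ)
            - (∫ ω, (∑ r, A ω r q.1 * A ω r q.2)^2 ∂μ)
              * (∫ ω, (∑ r, A ω r q'.1 * A ω r q'.2)^2 ∂μ)) := by
    rw [hES2, hES, sq, Finset.sum_mul_sum, ← Finset.sum_sub_distrib]
    exact Finset.sum_congr rfl fun q _ => by rw [← Finset.sum_sub_distrib]
  rw [hdiff]
  have hterm : ∑ q : Fin n × Fin n, ∑ q' : Fin n × Fin n,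
      ((∫ ω, (∑ r, A ω r q.1 * A ω r q.2)^2 * (∑ r, A ω r q'.1 * A ω r q'.2)^2 ∂μ)
        - (∫ ω, (∑ r, A ω r q.1 * A ω r q.2)^2 ∂μ)
          * (∫ ω, (∑ r, A ω r q'.1 * A ω r q'.2)^2 ∂μ))
      ≤ ∑ q : Fin n × Fin n, ∑ q' : Fin n × Fin n, Bfun n p q q' :=
    Finset.sum_le_sum fun q _ => Finset.sum_le_sum fun q' _ =>
      termwise hp0 hp1 hnp hmeas h01 hsingle hind q q'
  have hBsum := Bsum (n := n) hp0
  have hD : ∑ q : Fin n × Fin n, ∑ q' : Fin n × Fin n,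
      ((∫ ω, (∑ r, A ω r q.1 * A ω r q.2)^2 * (∑ r, A ω r q'.1 * A ω r q'.2)^2 ∂μ)
        - (∫ ω, (∑ r, A ω r q.1 * A ω r q.2)^2 ∂μ)
          * (∫ ω, (∑ r, A ω r q'.1 * A ω r q'.2)^2 ∂μ))
      ≤ (n:ℝ) * (24*((n:ℝ)*p)^4)
        + (4*(n:ℝ)^2) * (6*((n:ℝ)*p)^3*p + 24*((n:ℝ)*p)^4*p^2)
        + (2*(n:ℝ)^2) * (24*((n:ℝ)*p^2 + ((n:ℝ)*p^2)^4))
        + (4*(n:ℝ)^3) * (2*((n:ℝ)*p)^2*p^2 + 12*((n:ℝ)*p)^3*p^3 + 24*((n:ℝ)*p)^4*p^4) :=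
    le_trans hterm hBsum
  have hc2 : (0:ℝ) < c^2 := by positivity
  have hfin : (n:ℝ) * (24*((n:ℝ)*p)^4)
        + (4*(n:ℝ)^2) * (6*((n:ℝ)*p)^3*p + 24*((n:ℝ)*p)^4*p^2)
        + (2*(n:ℝ)^2) * (24*((n:ℝ)*p^2 + ((n:ℝ)*p^2)^4))
        + (4*(n:ℝ)^3) * (2*((n:ℝ)*p)^2*p^2 + 12*((n:ℝ)*p)^3*p^3 + 24*((n:ℝ)*p)^4*p^4)
      ≤ 10000 * ((n:ℝ) + (n:ℝ)^2*p^2 + (n:ℝ)^3*p^4) * c^2 := by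
    rw [hcdef]
    have e0 : (0:ℝ) ≤ (n:ℝ)^3*p^2 := by positivity
    have e0' : (0:ℝ) ≤ ((n:ℝ)*p)^2 - 1 := by nlinarith [hnp]
    have e1 : (n:ℝ)^3*p^2 ≤ (n:ℝ)^5*p^4 := by nlinarith [mul_nonneg e0 e0']
    have e2a : (0:ℝ) ≤ (n:ℝ)^6*p^6 := by positivity
    have e2b : (0:ℝ) ≤ 1 - p^2 := by nlinarith [hp1, hp0.le]
    have e2 : (n:ℝ)^6*p^8 ≤ (n:ℝ)^6*p^6 := by nlinarith [mul_nonneg e2a e2b]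
    have e3 : (0:ℝ) ≤ (n:ℝ)^5*p^4 := by positivity
    have e4 : (0:ℝ) ≤ (n:ℝ)^6*p^6 := by positivity
    have e5 : (0:ℝ) ≤ (n:ℝ)^7*p^8 := by positivity
    nlinarith [e1, e2, e3, e4, e5]
  rw [div_le_iff₀ hc2]
  calc ∑ q : Fin n × Fin n, ∑ q' : Fin n × Fin n,
      ((∫ ω, (∑ r, A ω r q.1 * A ω r q.2)^2 * (∑ r, A ω r q'.1 * A ω r q'.2)^2 ∂μ)
        - (∫ ω, (∑ r, A ω r q.1 * A ω r q.2)^2 ∂μ)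
          * (∫ ω, (∑ r, A ω r q'.1 * A ω r q'.2)^2 ∂μ))
      ≤ (n:ℝ) * (24*((n:ℝ)*p)^4)
        + (4*(n:ℝ)^2) * (6*((n:ℝ)*p)^3*p + 24*((n:ℝ)*p)^4*p^2)
        + (2*(n:ℝ)^2) * (24*((n:ℝ)*p^2 + ((n:ℝ)*p^2)^4))
        + (4*(n:ℝ)^3) * (2*((n:ℝ)*p)^2*p^2 + 12*((n:ℝ)*p)^3*p^3 + 24*((n:ℝ)*p)^4*p^4) := hD
    _ ≤ 10000 * ((n:ℝ) + (n:ℝ)^2*p^2 + (n:ℝ)^3*p^4) * c^2 := hfin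
end

section
/- Let B be a centered Bernoulli(p) random variable, i.e., B = A − p with A ~ Bernoulli(p), p ∈ (0,1), p ≠ 1/2. Then B is sub-Gaussian with variance proxy Q^2(p) = (1−2p)/(2 log((1−p)/p)); that is, E[exp(λB)] ≤ exp(λ^2 Q^2(p)/2) for all λ ∈ R. -/
open MeasureTheory ProbabilityTheory Real
open scoped ENNReal

lemma quad_between {A B C x₁ x₂ x₃ : ℝ} (hA : 0 ≤ A) (h12 : x₁ ≤ x₂) (h23 : x₂ ≤ x₃)
    (h1 : A*x₁^2 + B*x₁ + C < 0) (h3 : A*x₃^2 + B*x₃ + C < 0) :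
    A*x₂^2 + B*x₂ + C < 0 := by
  rcases eq_or_lt_of_le h12 with h | h12'
  · rwa [← h]
  · have h13 : x₁ < x₃ := lt_of_lt_of_le h12' h23
    have a1 : (x₃ - x₂)*(A*x₁^2 + B*x₁ + C) ≤ 0 :=
      mul_nonpos_of_nonneg_of_nonpos (sub_nonneg.2 h23) h1.le
    have a2 : (x₂ - x₁)*(A*x₃^2 + B*x₃ + C) < 0 :=
      mul_neg_of_pos_of_neg (sub_pos.2 h12') h3
    have a3 : 0 ≤ A*((x₂ - x₁)*((x₃ - x₂)*(x₃ - x₁))) :=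
      mul_nonneg hA (mul_nonneg (sub_nonneg.2 h12)
        (mul_nonneg (sub_nonneg.2 h23) (sub_nonneg.2 h13.le)))
    nlinarith [a1, a2, a3, sub_pos.2 h13]

noncomputable def fB (p c t : ℝ) : ℝ := Real.log ((1-p) + p*Real.exp t) - p*t - c*t^2
noncomputable def f1B (p c t : ℝ) : ℝ := p*Real.exp t/((1-p) + p*Real.exp t) - p - 2*c*t
noncomputable def f2B (p c t : ℝ) : ℝ :=
  p*(1-p)*Real.exp t/((1-p) + p*Real.exp t)^2 - 2*c
noncomputable def GB (p c t : ℝ) : ℝ :=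
  2*c*p^2*Real.exp t + 2*c*(1-p)^2*Real.exp (-t) + (4*c-1)*(p*(1-p))

lemma denB_pos {p : ℝ} (hp0 : 0 < p) (hp1 : p < 1) (t : ℝ) : 0 < (1-p) + p*Real.exp t :=
  add_pos (by linarith) (by positivity)

lemma hasDerivAt_fB {p : ℝ} (hp0 : 0 < p) (hp1 : p < 1) (c t : ℝ) :
    HasDerivAt (fun s => fB p c s) (f1B p c t) t := by
  have h1 : HasDerivAt (fun t => (1-p) + p*Real.exp t) (p*Real.exp t) t :=
    ((Real.hasDerivAt_exp t).const_mul p).const_add (1-p)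
  have h2 := h1.log (ne_of_gt (denB_pos hp0 hp1 t))
  have h3 : HasDerivAt (fun t : ℝ => p*t) p t :=
    ((hasDerivAt_id t).const_mul p).congr_deriv (mul_one p)
  have h4 : HasDerivAt (fun t : ℝ => c*t^2) (2*c*t) t :=
    ((hasDerivAt_pow 2 t).const_mul c).congr_deriv (by push_cast; ring)
  exact ((h2.sub h3).sub h4).congr_deriv (by rw [f1B])

lemma hasDerivAt_f1B {p : ℝ} (hp0 : 0 < p) (hp1 : p < 1) (c t : ℝ) :
    HasDerivAt (fun s => f1B p c s) (f2B p c t) t := by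
  have h1 : HasDerivAt (fun t => p*Real.exp t) (p*Real.exp t) t :=
    (Real.hasDerivAt_exp t).const_mul p
  have h2 : HasDerivAt (fun t => (1-p) + p*Real.exp t) (p*Real.exp t) t :=
    h1.const_add (1-p)
  have h3 := h1.div h2 (ne_of_gt (denB_pos hp0 hp1 t))
  have h4 : HasDerivAt (fun t : ℝ => p + 2*c*t) (2*c) t :=
    (((hasDerivAt_id t).const_mul (2*c)).congr_deriv (mul_one _)).const_add p
  have h5 := h3.sub h4
  have h6 : (fun s => f1B p c s)
      = fun s => p*Real.exp s/((1-p) + p*Real.exp s) - (p + 2*c*s) := by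
    funext s; rw [f1B]; ring
  rw [h6]
  refine h5.congr_deriv ?_
  rw [f2B]
  have hD := ne_of_gt (denB_pos hp0 hp1 t)
  field_simp
  ring

lemma f2B_eq_G {p : ℝ} (hp0 : 0 < p) (hp1 : p < 1) (c t : ℝ) :
    f2B p c t = -(Real.exp t * GB p c t)/((1-p) + p*Real.exp t)^2 := by
  rw [f2B, GB, Real.exp_neg]
  have hD := ne_of_gt (denB_pos hp0 hp1 t)
  have hE := ne_of_gt (Real.exp_pos t)
  field_simp
  ring

lemma f2B_nonpos {p : ℝ} (hp0 : 0 < p) (hp1 : p < 1) {c t : ℝ} (h : 0 ≤ GB p c t) :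
    f2B p c t ≤ 0 := by
  rw [f2B_eq_G hp0 hp1]
  apply div_nonpos_of_nonpos_of_nonneg
  · simp only [neg_nonpos]
    exact mul_nonneg (Real.exp_pos t).le h
  · positivity

lemma f2B_pos {p : ℝ} (hp0 : 0 < p) (hp1 : p < 1) {c t : ℝ} (h : GB p c t < 0) :
    0 < f2B p c t := by
  rw [f2B_eq_G hp0 hp1]
  apply div_pos
  · have := Real.exp_pos t; nlinarith
  · exact pow_pos (denB_pos hp0 hp1 t) 2

lemma GB_neg_of_f2B_pos {p : ℝ} (hp0 : 0 < p) (hp1 : p < 1) {c t : ℝ}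
    (h : 0 < f2B p c t) : GB p c t < 0 := by
  by_contra hc
  push_neg at hc
  exact absurd h (not_lt.2 (f2B_nonpos hp0 hp1 hc))

lemma GB_mul_exp {p c t : ℝ} :
    GB p c t * Real.exp t
      = 2*c*p^2*(Real.exp t)^2 + ((4*c-1)*(p*(1-p)))*(Real.exp t) + 2*c*(1-p)^2 := by
  rw [GB, Real.exp_neg]
  have hE := ne_of_gt (Real.exp_pos t)
  field_simp
  ring

lemma GB_interval {p c : ℝ} (hc : 0 ≤ c) {a b d : ℝ} (hab : a ≤ b) (hbd : b ≤ d)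
    (ha : GB p c a < 0) (hd : GB p c d < 0) : GB p c b < 0 := by
  have hQ : ∀ t, GB p c t < 0 →
      2*c*p^2*(Real.exp t)^2 + ((4*c-1)*(p*(1-p)))*(Real.exp t) + 2*c*(1-p)^2 < 0 := by
    intro t ht
    rw [← GB_mul_exp]
    exact mul_neg_of_neg_of_pos ht (Real.exp_pos t)
  have hQb := quad_between (by positivity) (Real.exp_le_exp.2 hab) (Real.exp_le_exp.2 hbd)
    (hQ a ha) (hQ d hd)
  rw [← GB_mul_exp] at hQb
  by_contra hcon
  push_neg at hcon
  exact absurd hQb (not_lt.2 (mul_nonneg hcon (Real.exp_pos b).le))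

lemma GB_nonneg_left {p c : ℝ} (hp0 : 0 < p) (hc : 0 < c)
    (F1 : p*(1-p) ≤ 2*c) (F2 : 4*c ≤ 1-p) {t : ℝ} (ht : t ≤ 0) : 0 ≤ GB p c t := by
  have hx1 : Real.exp t ≤ 1 := by
    calc Real.exp t ≤ Real.exp 0 := Real.exp_le_exp.2 ht
      _ = 1 := Real.exp_zero
  have hx0 := Real.exp_pos t
  have hQ : 0 ≤ 2*c*p^2*(Real.exp t)^2 + ((4*c-1)*(p*(1-p)))*(Real.exp t) + 2*c*(1-p)^2 := by
    nlinarith [mul_nonneg (mul_nonneg hp0.le (sub_nonneg.2 F2)) (sub_nonneg.2 hx1),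
      sub_nonneg.2 F1,
      mul_nonneg (mul_nonneg hc.le (sq_nonneg p)) (sq_nonneg (Real.exp t - 1))]
  rw [← GB_mul_exp] at hQ
  nlinarith [hQ, hx0]

lemma GB_nonneg_right {p c : ℝ} (hp0 : 0 < p) (hp1 : p < 1) (hc : 0 < c)
    (F1 : p*(1-p) ≤ 2*c) (F3 : p ≤ 4*c) {t : ℝ} (hx2 : (1-p)^2 ≤ p^2 * Real.exp t) :
    0 ≤ GB p c t := by
  have hx0 := Real.exp_pos t
  have hQ : 0 ≤ 2*c*p^2*(Real.exp t)^2 + ((4*c-1)*(p*(1-p)))*(Real.exp t) + 2*c*(1-p)^2 := by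
    have key : p^2*(2*c*p^2*(Real.exp t)^2 + ((4*c-1)*(p*(1-p)))*(Real.exp t) + 2*c*(1-p)^2)
        = 2*c*(p^2*Real.exp t-(1-p)^2)^2 + (1-p)*(4*c-p)*(p^2*Real.exp t-(1-p)^2)
          + (1-p)^2*(2*c-p*(1-p)) := by ring
    nlinarith [mul_nonneg (mul_nonneg (by linarith : (0:ℝ) ≤ 1-p) (sub_nonneg.2 F3))
        (sub_nonneg.2 hx2),
      mul_nonneg (sq_nonneg (1-p)) (sub_nonneg.2 F1),
      mul_nonneg hc.le (sq_nonneg (p^2*Real.exp t - (1-p)^2)), sq_nonneg p, key,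
      mul_pos hp0 hp0]
  rw [← GB_mul_exp] at hQ
  nlinarith [hQ, hx0]

lemma div_le_zero_of {d e : ℝ} (he : 0 < e) (h : d/e ≤ 0) : d ≤ 0 := by
  have h1 : d/e * e ≤ 0 := mul_nonpos_of_nonpos_of_nonneg h he.le
  rwa [div_mul_cancel₀ _ (ne_of_gt he)] at h1

lemma zero_le_div_of {d e : ℝ} (he : 0 < e) (h : 0 ≤ d/e) : 0 ≤ d := by
  have h1 : 0 ≤ d/e * e := mul_nonneg h he.le
  rwa [div_mul_cancel₀ _ (ne_of_gt he)] at h1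

lemma log_le_half_sub_inv {x : ℝ} (hx : 1 ≤ x) : Real.log x ≤ (x - x⁻¹)/2 := by
  rcases eq_or_lt_of_le hx with h | h
  · simp [← h]
  · have hder : ∀ y ∈ Set.Ioo (1:ℝ) x, HasDerivAt (fun y => (y - y⁻¹)/2 - Real.log y)
        (((1:ℝ) + (y^2)⁻¹)/2 - y⁻¹) y := by
      intro y hy
      have hy0 : y ≠ 0 := by nlinarith [hy.1]
      exact (((hasDerivAt_id y).sub (hasDerivAt_inv hy0)).div_const 2).sub
        (Real.hasDerivAt_log hy0) |>.congr_deriv (by ring)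
    obtain ⟨ξ, hξ, hslope⟩ := exists_hasDerivAt_eq_slope (fun y => (y - y⁻¹)/2 - Real.log y)
      (fun y => (((1:ℝ) + (y^2)⁻¹)/2 - y⁻¹)) h
      (by
        intro y hy
        have hy0 : y ≠ 0 := by rcases hy with ⟨h1, _⟩; nlinarith
        exact ContinuousAt.continuousWithinAt (by fun_prop (disch := assumption))) hder
    have hξ0 : 0 < ξ := lt_trans one_pos hξ.1
    have hpos : 0 ≤ ((1:ℝ) + (ξ^2)⁻¹)/2 - ξ⁻¹ := by
      have he : ((1:ℝ) + (ξ^2)⁻¹)/2 - ξ⁻¹ = (ξ-1)^2/(2*ξ^2) := by field_simp; ring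
      rw [he]; positivity
    rw [hslope] at hpos
    have hx1 : (0:ℝ) < x - 1 := sub_pos.2 h
    have h2 := (le_div_iff₀ hx1).1 hpos
    simp [Real.log_one] at h2
    linarith

lemma bernoulli_mgf_core (p : ℝ) (hp0 : 0 < p) (hp : p < 1/2) (l : ℝ) :
    (1-p) * Real.exp (l*(0-p)) + p * Real.exp (l*(1-p))
      ≤ Real.exp (l^2 * ((1 - 2*p)/(4 * Real.log ((1-p)/p)))) := by
  have hp1 : p < 1 := by linarith
  have hq0 : 0 < 1 - p := by linarith
  have hqp1 : 1 < (1-p)/p := (one_lt_div hp0).2 (by linarith)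
  set L : ℝ := Real.log ((1-p)/p) with hLdef
  have hL : 0 < L := Real.log_pos hqp1
  set c : ℝ := (1 - 2*p)/(4*L) with hcdef
  have hc0 : 0 < c := div_pos (by linarith) (by linarith)
  have hcL : 4*c*L = 1 - 2*p := by
    rw [hcdef]; field_simp
  have heL : Real.exp L = (1-p)/p := Real.exp_log (by positivity)
  have he2L : Real.exp (2*L) = ((1-p)/p)^2 := by
    rw [two_mul, Real.exp_add, heL]; ring
  have F1 : p*(1-p) ≤ 2*c := by
    have hlog := log_le_half_sub_inv hqp1.le
    rw [inv_div] at hlog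
    have hlog' : L * (p*(1-p)*2) ≤ (1-p)*(1-p) - p*p := by
      rw [div_sub_div _ _ (ne_of_gt hp0) (ne_of_gt hq0), div_div] at hlog
      exact (le_div_iff₀ (by positivity)).1 hlog
    rw [← mul_le_mul_iff_of_pos_right hL]
    nlinarith [hcL]
  have F2 : 4*c ≤ 1-p := by
    have h := Real.log_le_sub_one_of_pos (div_pos hp0 hq0)
    have hlp : Real.log (p/(1-p)) = -L := by
      rw [hLdef, ← Real.log_inv, inv_div]
    rw [hlp, div_sub_one (ne_of_gt hq0)] at h
    have h2 := (le_div_iff₀ hq0).1 h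
    rw [← mul_le_mul_iff_of_pos_right hL, hcL]
    nlinarith
  have F3 : p ≤ 4*c := by
    have h := Real.log_le_sub_one_of_pos (div_pos hq0 hp0)
    rw [← hLdef, div_sub_one (ne_of_gt hp0)] at h
    have h2 := (le_div_iff₀ hp0).1 h
    rw [← mul_le_mul_iff_of_pos_right hL, hcL]
    nlinarith
  have hmvt : ∀ (F F' : ℝ → ℝ), (∀ t, HasDerivAt F (F' t) t) → ∀ a b : ℝ, a < b →
      ∃ ξ ∈ Set.Ioo a b, F' ξ = (F b - F a)/(b - a) := by
    intro F F' hF a b hab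
    exact exists_hasDerivAt_eq_slope F F' hab
      (fun x _ => (hF x).continuousAt.continuousWithinAt) (fun x _ => hF x)
  have hfd : ∀ t, HasDerivAt (fun s => fB p c s) (f1B p c t) t := hasDerivAt_fB hp0 hp1 c
  have hf1d : ∀ t, HasDerivAt (fun s => f1B p c s) (f2B p c t) t := hasDerivAt_f1B hp0 hp1 c
  -- special values
  have v1 : fB p c 0 = 0 := by
    rw [fB, Real.exp_zero]
    norm_num
  have v2 : f1B p c 0 = 0 := by
    rw [f1B, Real.exp_zero]
    have : (1-p) + p*1 = 1 := by ring
    rw [this]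
    norm_num
  have v3 : fB p c (2*L) = 0 := by
    rw [fB, he2L]
    have harg : (1-p) + p*((1-p)/p)^2 = (1-p)/p := by
      field_simp; ring
    rw [harg, ← hLdef]
    linear_combination (-L) * hcL
  have v4 : f1B p c (2*L) = 0 := by
    rw [f1B, he2L]
    have harg : p*((1-p)/p)^2/((1-p) + p*((1-p)/p)^2) = 1-p := by
      rw [div_eq_iff]
      · field_simp; ring
      · have := denB_pos hp0 hp1 (2*L)
        rw [he2L] at this
        exact ne_of_gt this
    rw [harg]
    linear_combination -hcL
  -- f1 sign on the outer regions
  have hf1left : ∀ t, t < 0 → 0 ≤ f1B p c t := by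
    intro t ht
    obtain ⟨ζ, hζ, hs⟩ := hmvt _ _ hf1d t 0 ht
    have hf2ζ : f2B p c ζ ≤ 0 :=
      f2B_nonpos hp0 hp1 (GB_nonneg_left hp0 hc0 F1 F2 hζ.2.le)
    rw [hs, v2] at hf2ζ
    have := div_le_zero_of (by linarith : (0:ℝ) < 0 - t) hf2ζ
    linarith
  have hf1right : ∀ t, 2*L < t → f1B p c t ≤ 0 := by
    intro t ht
    obtain ⟨ζ, hζ, hs⟩ := hmvt _ _ hf1d (2*L) t ht
    have hGζ : 0 ≤ GB p c ζ := by
      apply GB_nonneg_right hp0 hp1 hc0 F1 F3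
      have hx : ((1-p)/p)^2 ≤ Real.exp ζ := by
        rw [← he2L]; exact Real.exp_le_exp.2 hζ.1.le
      rw [div_pow] at hx
      calc (1-p)^2 = ((1-p)^2/p^2) * p^2 := by field_simp
        _ ≤ Real.exp ζ * p^2 := mul_le_mul_of_nonneg_right hx (sq_nonneg p)
        _ = p^2 * Real.exp ζ := by ring
    have hf2ζ : f2B p c ζ ≤ 0 := f2B_nonpos hp0 hp1 hGζ
    rw [hs, v4] at hf2ζ
    have := div_le_zero_of (by linarith : (0:ℝ) < t - 2*L) hf2ζ
    linarith
  -- main claim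
  have hmain : ∀ t : ℝ, fB p c t ≤ 0 := by
    intro t
    rcases lt_trichotomy t 0 with ht | ht | ht
    · obtain ⟨ξ, hξ, hs⟩ := hmvt _ _ hfd t 0 ht
      have hf1ξ : 0 ≤ f1B p c ξ := hf1left ξ hξ.2
      rw [hs, v1] at hf1ξ
      have := zero_le_div_of (by linarith : (0:ℝ) < 0 - t) hf1ξ
      linarith
    · rw [ht, v1]
    · rcases lt_trichotomy t (2*L) with ht2 | ht2 | ht2
      · -- middle region
        obtain ⟨ξ, hξ, hsξ⟩ := hmvt _ _ hfd 0 t ht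
        rcases le_or_gt (f1B p c ξ) 0 with hfξ | hfξ
        · rw [hsξ, v1] at hfξ
          have := div_le_zero_of (by linarith : (0:ℝ) < t - 0) hfξ
          linarith
        · obtain ⟨η, hη, hsη⟩ := hmvt _ _ hfd t (2*L) ht2
          rcases le_or_gt 0 (f1B p c η) with hfη | hfη
          · rw [hsη, v3] at hfη
            have := zero_le_div_of (by linarith : (0:ℝ) < 2*L - t) hfη
            linarith
          · exfalso
            have hξη : ξ < η := lt_trans hξ.2 hη.1
            obtain ⟨ζ₁, hζ₁, hs₁⟩ := hmvt _ _ hf1d 0 ξ hξ.1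
            obtain ⟨ζ₂, hζ₂, hs₂⟩ := hmvt _ _ hf1d ξ η hξη
            obtain ⟨ζ₃, hζ₃, hs₃⟩ := hmvt _ _ hf1d η (2*L) hη.2
            have hG1 : GB p c ζ₁ < 0 := by
              apply GB_neg_of_f2B_pos hp0 hp1
              rw [hs₁, v2]
              apply div_pos (by linarith) (by linarith [hξ.1])
            have hG3 : GB p c ζ₃ < 0 := by
              apply GB_neg_of_f2B_pos hp0 hp1
              rw [hs₃, v4]
              apply div_pos (by linarith) (by linarith [hη.2])
            have hG2 : GB p c ζ₂ < 0 :=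
              GB_interval hc0.le (by linarith [hζ₁.2, hζ₂.1])
                (by linarith [hζ₂.2, hζ₃.1]) hG1 hG3
            have hf2pos : 0 < f2B p c ζ₂ := f2B_pos hp0 hp1 hG2
            rw [hs₂] at hf2pos
            have hneg : (f1B p c η - f1B p c ξ)/(η - ξ) < 0 :=
              div_neg_of_neg_of_pos (by linarith) (by linarith)
            linarith
      · rw [ht2, v3]
      · obtain ⟨ξ, hξ, hs⟩ := hmvt _ _ hfd (2*L) t ht2
        have hf1ξ : f1B p c ξ ≤ 0 := hf1right ξ hξ.1
        rw [hs, v3] at hf1ξ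
        have := div_le_zero_of (by linarith : (0:ℝ) < t - 2*L) hf1ξ
        linarith
  -- conclude
  have hfl := hmain l
  rw [fB] at hfl
  have hlog : Real.log ((1-p) + p*Real.exp l) ≤ p*l + c*l^2 := by linarith
  have hD : (1-p) + p*Real.exp l ≤ Real.exp (p*l + c*l^2) := by
    rw [← Real.exp_log (denB_pos hp0 hp1 l)]
    exact Real.exp_le_exp.2 hlog
  have hrw : (1-p) * Real.exp (l*(0-p)) + p * Real.exp (l*(1-p))
      = Real.exp (-(p*l)) * ((1-p) + p*Real.exp l) := by
    rw [show l*(0-p) = -(p*l) + 0 by ring, show l*(1-p) = -(p*l) + l by ring,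
      Real.exp_add, Real.exp_add, Real.exp_zero]
    ring
  rw [hrw]
  calc Real.exp (-(p*l)) * ((1-p) + p*Real.exp l)
      ≤ Real.exp (-(p*l)) * Real.exp (p*l + c*l^2) :=
        mul_le_mul_of_nonneg_left hD (Real.exp_pos _).le
    _ = Real.exp (l^2 * c) := by rw [← Real.exp_add]; ring_nf


lemma bernoulli_integral {Ω : Type*} [MeasurableSpace Ω] (μ : Measure Ω)
    [IsProbabilityMeasure μ] (p : ℝ) (hp0 : 0 ≤ p) (hp1 : p ≤ 1)
    (A : Ω → ℝ) (hmeas : Measurable A) (hval : ∀ ω, A ω = 0 ∨ A ω = 1)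
    (hprob : μ {ω | A ω = 1} = ENNReal.ofReal p) (l : ℝ) :
    ∫ ω, Real.exp (l * (A ω - p)) ∂μ
      = (1-p) * Real.exp (l*(0-p)) + p * Real.exp (l*(1-p)) := by
  set S : Set Ω := {ω | A ω = 1} with hSdef
  have hS : MeasurableSet S := hmeas (measurableSet_singleton 1)
  have hfun : (fun ω => Real.exp (l * (A ω - p)))
      = fun ω => S.indicator (fun _ => Real.exp (l*(1-p))) ω
        + Sᶜ.indicator (fun _ => Real.exp (l*(0-p))) ω := by
    funext ω
    rcases hval ω with h | h
    · have hω : ω ∉ S := by simp [hSdef, h]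
      rw [Set.indicator_of_notMem hω, Set.indicator_of_mem (by simpa using hω), h]
      norm_num
    · have hω : ω ∈ S := by simp [hSdef, h]
      rw [Set.indicator_of_mem hω, Set.indicator_of_notMem (by simpa using hω), h]
      norm_num
  rw [hfun, integral_add ((integrable_const _).indicator hS)
    ((integrable_const _).indicator hS.compl),
    integral_indicator hS, integral_indicator hS.compl,
    setIntegral_const, setIntegral_const]
  have hμS : (μ S).toReal = p := by rw [hprob, ENNReal.toReal_ofReal hp0]
  have hcompl : μ Sᶜ = ENNReal.ofReal (1-p) := by
    rw [measure_compl hS (measure_ne_top μ S), measure_univ, hprob,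
      ← ENNReal.ofReal_one, ← ENNReal.ofReal_sub _ hp0]
  have hμSc : (μ Sᶜ).toReal = 1 - p := by
    rw [hcompl, ENNReal.toReal_ofReal (by linarith)]
  rw [Measure.real, Measure.real, hμS, hμSc]
  simp [smul_eq_mul]
  ring

/-- a centered Bernoulli(p) variable `B = A − p` is sub-Gaussian with
the optimal variance proxy `Q²(p) = (1−2p)/(2 log((1−p)/p))`:
`E[exp(λB)] ≤ exp(λ² Q²(p)/2)` for all real `λ`. -/
theorem bernoulli_optimal_subgaussian {Ω : Type*} [MeasurableSpace Ω] (μ : Measure Ω)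
    [IsProbabilityMeasure μ] (p : ℝ) (hp0 : 0 < p) (hp1 : p < 1) (hphalf : p ≠ 1 / 2)
    (A : Ω → ℝ) (hmeas : Measurable A) (hber : IsBernoulli μ A p) :
    ∀ l : ℝ, ∫ ω, Real.exp (l * (A ω - p)) ∂μ
      ≤ Real.exp (l ^ 2 * ((1 - 2 * p) / (2 * Real.log ((1 - p) / p))) / 2) := by
  intro l
  obtain ⟨hval, hprob⟩ := hber
  rw [bernoulli_integral μ p hp0.le hp1.le A hmeas hval hprob l]
  rcases lt_or_gt_of_ne hphalf with hlt | hgt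
  · refine le_trans (bernoulli_mgf_core p hp0 hlt l) (le_of_eq ?_)
    congr 1
    ring
  · have h := bernoulli_mgf_core (1-p) (by linarith) (by linarith) (-l)
    rw [show (1:ℝ)-(1-p) = p from by ring] at h
    rw [show Real.log (p/(1-p)) = - Real.log ((1-p)/p) from by
      rw [← Real.log_inv, inv_div]] at h
    refine le_trans (le_of_eq ?_) (le_trans h (le_of_eq ?_))
    · rw [show l*(0-p) = -l*p from by ring,
        show (-l)*(0-(1-p)) = l*(1-p) from by ring]
      ring
    · congr 1
      ring
end

section
/- Let M be a symmetric d×d matrix and Σ a symmetric d×d matrix with largest eigenvalue λ_max(Σ) and ‖M − Σ‖_∞ ≤ ε (entrywise max norm). Then for every nonzero v in the cone C(s,κ) = {v : ‖v_{S^c}‖_1 ≤ κ‖v_S‖_1, |S| = s}, we have v^T M v / ‖v‖_2^2 ≤ λ_max(Σ) + (1+κ)^2 s ε. -/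
open Matrix

lemma rayleigh_aux (d : ℕ) (hd : 0 < d) (Sg : Matrix (Fin d) (Fin d) ℝ) (hSg : Sg.IsHermitian)
    (v : Fin d → ℝ) :
    v ⬝ᵥ Sg.mulVec v ≤ (Finset.univ.sup' ⟨(⟨0, hd⟩ : Fin d), Finset.mem_univ _⟩ hSg.eigenvalues) * ∑ i, (v i)^2 := by
  set lam := hSg.eigenvalues with hlam
  set B := hSg.eigenvectorBasis with hB
  set V : EuclideanSpace ℝ (Fin d) := WithLp.toLp 2 v with hV
  set c : Fin d → ℝ := fun i => inner ℝ (B i) V with hc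
  have hrepr : ∑ i, c i • (B i : EuclideanSpace ℝ (Fin d)) = V := B.sum_repr' V
  have hci : ∀ i, (inner ℝ V (B i) : ℝ) = c i := by
    intro i
    rw [hc]
    exact real_inner_comm (B i) V
  have hdot : ∀ w : EuclideanSpace ℝ (Fin d), v ⬝ᵥ (w : Fin d → ℝ) = inner ℝ V w := by
    intro w
    simp [dotProduct, PiLp.inner_apply, RCLike.inner_apply, hV, mul_comm]
  -- Parseval
  have hpars : ∑ i, (c i)^2 = ∑ i, (v i)^2 := by
    have h1 : (inner ℝ V V : ℝ) = ∑ i, (v i)^2 := by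
      rw [hV, PiLp.inner_apply]
      simp [RCLike.inner_apply, sq, mul_comm]
    have h2 : (inner ℝ V V : ℝ) = ∑ i, (c i)^2 := by
      nth_rw 2 [← hrepr]
      rw [inner_sum]
      refine Finset.sum_congr rfl fun i _ => ?_
      rw [real_inner_smul_right, hci i, sq]
    rw [← h1, h2]
  have heig : ∀ i, (WithLp.toLp 2 (Sg.mulVec (B i)) : EuclideanSpace ℝ (Fin d)) = lam i • (B i : EuclideanSpace ℝ (Fin d)) :=
    fun i => by rw [hSg.mulVec_eigenvectorBasis i]; rfl
  have hmv : (WithLp.toLp 2 (Sg.mulVec V) : EuclideanSpace ℝ (Fin d)) = ∑ i, (lam i * c i) • (B i : EuclideanSpace ℝ (Fin d)) := by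
    conv_lhs => rw [← hrepr]
    rw [WithLp.ofLp_sum, Matrix.mulVec_sum, WithLp.toLp_sum]
    refine Finset.sum_congr rfl fun i _ => ?_
    rw [WithLp.ofLp_smul, Matrix.mulVec_smul, WithLp.toLp_smul]
    rw [heig i, smul_smul, mul_comm]
  have hquad : v ⬝ᵥ Sg.mulVec v = ∑ i, lam i * (c i)^2 := by
    rw [show Sg.mulVec v = ((WithLp.toLp 2 (Sg.mulVec V) : EuclideanSpace ℝ (Fin d)) : Fin d → ℝ) from rfl,
      hdot, hmv, inner_sum]
    refine Finset.sum_congr rfl fun i _ => ?_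
    rw [real_inner_smul_right, hci i]; ring
  rw [hquad, ← hpars, Finset.mul_sum]
  refine Finset.sum_le_sum fun i _ => ?_
  have h1 : lam i ≤ Finset.univ.sup' ⟨(⟨0, hd⟩ : Fin d), Finset.mem_univ _⟩ lam :=
    Finset.le_sup' lam (Finset.mem_univ i)
  nlinarith [sq_nonneg (c i)]

/-- if `M` and `Σ` are symmetric `d×d` matrices with `‖M − Σ‖_∞ ≤ ε`
entrywise, then for every nonzero `v` in the cone `C(s,κ)`,
`vᵀ M v / ‖v‖₂² ≤ λ_max(Σ) + (1+κ)² s ε`. -/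
theorem rayleigh_bound_on_cone (d s : ℕ) (hd : 0 < d) (κ ε : ℝ) (hκ : 0 ≤ κ) (hε : 0 ≤ ε)
    (M Sg : Matrix (Fin d) (Fin d) ℝ) (hM : M.IsHermitian) (hSg : Sg.IsHermitian)
    (hclose : ∀ i j, |M i j - Sg i j| ≤ ε)
    (v : Fin d → ℝ) (hv : v ≠ 0)
    (S : Finset (Fin d)) (hS : S.card = s)
    (hcone : ∑ i ∈ Sᶜ, |v i| ≤ κ * ∑ i ∈ S, |v i|) :
    (v ⬝ᵥ M.mulVec v) / (∑ i, (v i) ^ 2)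
      ≤ Finset.univ.sup' ⟨(⟨0, hd⟩ : Fin d), Finset.mem_univ _⟩ hSg.eigenvalues
        + (1 + κ) ^ 2 * s * ε := by
  have hpos : 0 < ∑ i, (v i) ^ 2 := by
    obtain ⟨i, hi⟩ := Function.ne_iff.mp hv
    have h0 : 0 < (v i) ^ 2 := pow_two_pos_of_ne_zero hi
    exact lt_of_lt_of_le h0 (Finset.single_le_sum (fun j _ => sq_nonneg (v j)) (Finset.mem_univ i))
  have h1 : v ⬝ᵥ Sg.mulVec v
      ≤ (Finset.univ.sup' ⟨(⟨0, hd⟩ : Fin d), Finset.mem_univ _⟩ hSg.eigenvalues) * ∑ i, (v i)^2 :=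
    rayleigh_aux d hd Sg hSg v
  -- perturbation bound
  have h2 : v ⬝ᵥ M.mulVec v - v ⬝ᵥ Sg.mulVec v = ∑ i, ∑ j, v i * ((M i j - Sg i j) * v j) := by
    simp only [dotProduct, mulVec, Finset.mul_sum, ← Finset.sum_sub_distrib]
    exact Finset.sum_congr rfl fun i _ => Finset.sum_congr rfl fun j _ => by ring
  have h3 : v ⬝ᵥ M.mulVec v - v ⬝ᵥ Sg.mulVec v ≤ ε * (∑ i, |v i|) ^ 2 := by
    rw [h2]
    calc ∑ i, ∑ j, v i * ((M i j - Sg i j) * v j)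
        ≤ ∑ i, ∑ j, |v i| * (ε * |v j|) := by
          refine Finset.sum_le_sum fun i _ => Finset.sum_le_sum fun j _ => ?_
          calc v i * ((M i j - Sg i j) * v j) ≤ |v i * ((M i j - Sg i j) * v j)| := le_abs_self _
            _ = |v i| * (|M i j - Sg i j| * |v j|) := by rw [abs_mul, abs_mul]
            _ ≤ |v i| * (ε * |v j|) :=
                mul_le_mul_of_nonneg_left
                  (mul_le_mul_of_nonneg_right (hclose i j) (abs_nonneg _)) (abs_nonneg _)
      _ = ε * (∑ i, |v i|) ^ 2 := by
          rw [sq, Finset.sum_mul_sum, Finset.mul_sum]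
          refine Finset.sum_congr rfl fun i _ => ?_
          rw [Finset.mul_sum]
          exact Finset.sum_congr rfl fun j _ => by ring
  have hSnn : (0:ℝ) ≤ ∑ i ∈ S, |v i| := Finset.sum_nonneg fun i _ => abs_nonneg _
  have h4 : (∑ i, |v i|) ≤ (1 + κ) * ∑ i ∈ S, |v i| := by
    rw [← Finset.sum_add_sum_compl S]
    linarith
  have h5 : (∑ i ∈ S, |v i|) ^ 2 ≤ s * ∑ i, (v i) ^ 2 := by
    calc (∑ i ∈ S, |v i|) ^ 2 ≤ S.card * ∑ i ∈ S, |v i| ^ 2 := sq_sum_le_card_mul_sum_sq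
      _ = s * ∑ i ∈ S, (v i) ^ 2 := by rw [hS]; simp [sq_abs]
      _ ≤ s * ∑ i, (v i) ^ 2 := by
          exact mul_le_mul_of_nonneg_left
            (Finset.sum_le_sum_of_subset_of_nonneg (Finset.subset_univ S)
              (fun i _ _ => sq_nonneg _)) (Nat.cast_nonneg s)
  have h6 : (∑ i, |v i|) ^ 2 ≤ (1 + κ) ^ 2 * (s * ∑ i, (v i) ^ 2) := by
    have hnn : (0:ℝ) ≤ ∑ i, |v i| := Finset.sum_nonneg fun i _ => abs_nonneg _
    calc (∑ i, |v i|) ^ 2 ≤ ((1 + κ) * ∑ i ∈ S, |v i|) ^ 2 := by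
          apply pow_le_pow_left₀ hnn h4
      _ = (1 + κ) ^ 2 * (∑ i ∈ S, |v i|) ^ 2 := by ring
      _ ≤ (1 + κ) ^ 2 * (s * ∑ i, (v i) ^ 2) := by
          apply mul_le_mul_of_nonneg_left h5 (by positivity)
  rw [div_le_iff₀ hpos]
  have h7 : ε * (∑ i, |v i|) ^ 2 ≤ ε * ((1 + κ) ^ 2 * (s * ∑ i, (v i) ^ 2)) :=
    mul_le_mul_of_nonneg_left h6 hε
  nlinarith [h1, h3, h7]
end

section
/- Define Π_0(s) = {u ∈ R^d : ‖u‖_2 ≤ 1, ‖u‖_0 ≤ s} and Π_1(s) = {u ∈ R^d : ‖u‖_2 ≤ 1, ‖u‖_1 ≤ √s}. Then Π_1(s) is contained in 2 · conv̄(Π_0(s)), the closed convex hull of Π_0(s) dilated by factor 2. -/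
open Finset

lemma pv_sgn_mul_abs (x : ℝ) : Real.sign x * |x| = x := by
  rcases lt_trichotomy x 0 with h|h|h
  · rw [Real.sign_of_neg h, abs_of_neg h]; ring
  · simp [h]
  · rw [Real.sign_of_pos h, abs_of_pos h]; ring

lemma pv_abs_add_sgn {x : ℝ} (hx : x ≠ 0) {t : ℝ} (ht : 0 ≤ t) :
    |x + t * Real.sign x| = |x| + t := by
  have h1 : x + t * Real.sign x = Real.sign x * (|x| + t) := by
    rw [mul_add, pv_sgn_mul_abs]; ring
  rw [h1, abs_mul]
  rcases Real.sign_apply_eq_of_ne_zero x hx with h|h <;> rw [h] <;>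
    simp [abs_of_nonneg (by positivity : (0:ℝ) ≤ |x| + t)]

lemma pv_abs_sub_sgn {x : ℝ} (hx : x ≠ 0) {t : ℝ} (ht : 0 ≤ t) (ht2 : t ≤ |x|) :
    |x - t * Real.sign x| = |x| - t := by
  have h1 : x - t * Real.sign x = Real.sign x * (|x| - t) := by
    rw [mul_sub, pv_sgn_mul_abs]; ring
  rw [h1, abs_mul]
  rcases Real.sign_apply_eq_of_ne_zero x hx with h|h <;> rw [h] <;>
    simp [abs_of_nonneg (by linarith : (0:ℝ) ≤ |x| - t)]

lemma pv_sum_split {α : Type*} [Fintype α] [DecidableEq α] (f : α → ℝ) {i j : α} (hij : i ≠ j) :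
    ∑ k, f k = f i + f j + ∑ k ∈ (Finset.univ.erase i).erase j, f k := by
  rw [← Finset.sum_erase_add _ _ (Finset.mem_univ i),
    ← Finset.sum_erase_add _ _ (Finset.mem_erase.mpr ⟨hij.symm, Finset.mem_univ j⟩)]
  ring

/-- perturbation of `v` increasing `|v i|` by `t` and decreasing `|v j|` by `t`. -/
noncomputable def pv_upd {d : ℕ} (v : EuclideanSpace ℝ (Fin d)) (i j : Fin d) (t : ℝ) :
    EuclideanSpace ℝ (Fin d) :=
  WithLp.toLp 2 fun k => if k = i then v i + t * Real.sign (v i)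
    else if k = j then v j - t * Real.sign (v j) else v k

lemma pv_step {d : ℕ} {R : ℝ} {v : EuclideanSpace ℝ (Fin d)}
    {i j : Fin d} (hij : i ≠ j)
    (hvi : 0 < |v i| ∧ |v i| < R) (hvj : 0 < |v j| ∧ |v j| < R)
    (hinf : ∀ k, |v k| ≤ R)
    {t : ℝ} (ht0 : 0 ≤ t) (hti : t ≤ R - |v i|) (htj : t ≤ |v j|) :
    (∀ k, |pv_upd v i j t k| = if k = i then |v i| + t else if k = j then |v j| - t else |v k|)
    ∧ (∀ k, |pv_upd v i j t k| ≤ R)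
    ∧ (∑ k, |pv_upd v i j t k|) = ∑ k, |v k|
    ∧ ((Finset.univ.filter fun k => 0 < |pv_upd v i j t k| ∧ |pv_upd v i j t k| < R)
        ⊆ Finset.univ.filter fun k => 0 < |v k| ∧ |v k| < R) := by
  have hvine : v i ≠ 0 := abs_pos.mp hvi.1
  have hvjne : v j ≠ 0 := abs_pos.mp hvj.1
  have habs : ∀ k, |pv_upd v i j t k|
      = if k = i then |v i| + t else if k = j then |v j| - t else |v k| := by
    intro k
    simp only [pv_upd, PiLp.toLp_apply]
    by_cases hki : k = i
    · rw [if_pos hki, if_pos hki]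
      exact pv_abs_add_sgn hvine ht0
    · rw [if_neg hki, if_neg hki]
      by_cases hkj : k = j
      · rw [if_pos hkj, if_pos hkj]
        exact pv_abs_sub_sgn hvjne ht0 htj
      · rw [if_neg hkj, if_neg hkj]
  refine ⟨habs, ?_, ?_, ?_⟩
  · intro k
    rw [habs k]
    by_cases hki : k = i
    · rw [if_pos hki]; linarith
    · rw [if_neg hki]
      by_cases hkj : k = j
      · rw [if_pos hkj]; linarith [hvj.2]
      · rw [if_neg hkj]; exact hinf k
  · have h1 : |pv_upd v i j t i| = |v i| + t := by rw [habs i, if_pos rfl]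
    have h2 : |pv_upd v i j t j| = |v j| - t := by rw [habs j, if_neg hij.symm, if_pos rfl]
    rw [pv_sum_split (fun k => |pv_upd v i j t k|) hij, pv_sum_split (fun k => |v k|) hij,
      h1, h2]
    have : ∑ k ∈ (Finset.univ.erase i).erase j, |pv_upd v i j t k|
        = ∑ k ∈ (Finset.univ.erase i).erase j, |v k| := by
      refine Finset.sum_congr rfl fun k hk => ?_
      rw [Finset.mem_erase, Finset.mem_erase] at hk
      rw [habs k, if_neg hk.2.1, if_neg hk.1]
    rw [this]; ring
  · intro k hk
    rw [Finset.mem_filter] at hk ⊢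
    refine ⟨Finset.mem_univ k, ?_⟩
    by_cases hki : k = i
    · exact hki ▸ hvi
    · by_cases hkj : k = j
      · exact hkj ▸ hvj
      · rw [habs k, if_neg hki, if_neg hkj] at hk
        exact hk.2

def pvK (d s : ℕ) : Set (EuclideanSpace ℝ (Fin d)) :=
  {u | ‖u‖ ≤ 1 ∧ (Finset.univ.filter fun i => u i ≠ 0).card ≤ s}

lemma pv_sq_sum_le {d : ℕ} {u : EuclideanSpace ℝ (Fin d)} (h : ‖u‖ ≤ 1) :
    ∑ i, (u i)^2 ≤ 1 := by
  rw [EuclideanSpace.norm_eq] at h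
  have h2 : ∑ i, ‖u i‖^2 ≤ 1 := Real.sqrt_le_one.mp h
  calc ∑ i, (u i)^2 = ∑ i, ‖u i‖^2 := by
        exact Finset.sum_congr rfl fun i _ => by rw [Real.norm_eq_abs, sq_abs]
  _ ≤ 1 := h2

lemma pv_mem_pvK {d s : ℕ} {v : EuclideanSpace ℝ (Fin d)}
    (h1 : ∑ i, (v i)^2 ≤ 1) (h2 : (Finset.univ.filter fun i => v i ≠ 0).card ≤ s) :
    v ∈ pvK d s := by
  refine ⟨?_, h2⟩
  rw [EuclideanSpace.norm_eq]
  have : ∑ i, ‖v i‖^2 = ∑ i, (v i)^2 :=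
    Finset.sum_congr rfl fun i _ => by rw [Real.norm_eq_abs, sq_abs]
  rw [this]
  exact Real.sqrt_le_one.mpr h1

lemma pv_keyA {d s : ℕ} (hs : 1 ≤ s) :
    ∀ (n : ℕ) (v : EuclideanSpace ℝ (Fin d)),
      (Finset.univ.filter fun i => 0 < |v i| ∧ |v i| < (Real.sqrt s)⁻¹).card = n →
      (∀ i, |v i| ≤ (Real.sqrt s)⁻¹) → (∑ i, |v i|) ≤ s * (Real.sqrt s)⁻¹ →
      v ∈ convexHull ℝ (pvK d s) := by
  have hs0 : 0 < (s:ℝ) := by exact_mod_cast hs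
  have hsq : 0 < Real.sqrt s := Real.sqrt_pos.mpr hs0
  set R : ℝ := (Real.sqrt (s:ℕ))⁻¹ with hRdef
  have hR0 : 0 < R := inv_pos.mpr hsq
  have hR2 : (s:ℝ) * R^2 = 1 := by
    rw [hRdef, inv_pow, Real.sq_sqrt hs0.le]
    field_simp
  intro n
  induction n using Nat.strong_induction_on with
  | _ n ih =>
    intro v hcard hinf hl1
    by_cases hn : n ≤ 1
    · -- base case: at most one "fractional" coordinate; v is itself s-sparse
      apply subset_convexHull
      have hsupp : (Finset.univ.filter fun i => v i ≠ 0)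
          ⊆ (Finset.univ.filter fun i => 0 < |v i| ∧ |v i| < R)
            ∪ (Finset.univ.filter fun i : Fin d => |v i| = R) := by
        intro k hk
        rw [Finset.mem_filter] at hk
        rcases lt_or_eq_of_le (hinf k) with h|h
        · exact Finset.mem_union_left _
            (Finset.mem_filter.mpr ⟨Finset.mem_univ k, abs_pos.mpr hk.2, h⟩)
        · exact Finset.mem_union_right _ (Finset.mem_filter.mpr ⟨Finset.mem_univ k, h⟩)
      set F := Finset.univ.filter fun i => 0 < |v i| ∧ |v i| < R with hFdef
      set P := Finset.univ.filter fun i : Fin d => |v i| = R with hPdef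
      have hPsum : (P.card : ℝ) * R = ∑ i ∈ P, |v i| := by
        rw [Finset.sum_congr rfl (fun i hi => (Finset.mem_filter.mp hi).2),
          Finset.sum_const, nsmul_eq_mul]
      have hdisj : Disjoint P F := by
        rw [Finset.disjoint_left]
        intro a haP haF
        rw [hPdef, Finset.mem_filter] at haP
        rw [hFdef, Finset.mem_filter] at haF
        exact absurd haP.2 (ne_of_lt haF.2.2)
      have hsum_le : ∑ i ∈ P, |v i| + ∑ i ∈ F, |v i| ≤ ∑ i, |v i| := by
        rw [← Finset.sum_union hdisj]
        exact Finset.sum_le_sum_of_subset_of_nonneg (Finset.subset_univ _)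
          (fun i _ _ => abs_nonneg _)
      have hcardPF : F.card + P.card ≤ s := by
        rcases Nat.le_one_iff_eq_zero_or_eq_one.mp hn with h0|h1
        · have hF0 : F.card = 0 := hcard.trans h0
          have hFnn : (0:ℝ) ≤ ∑ i ∈ F, |v i| :=
            Finset.sum_nonneg fun i _ => abs_nonneg _
          have hPle : (P.card : ℝ) * R ≤ (s:ℝ) * R := by
            rw [hPsum]; linarith
          have : (P.card : ℝ) ≤ (s:ℝ) := le_of_mul_le_mul_right hPle hR0
          have hP : P.card ≤ s := by exact_mod_cast this
          omega
        · have hF1 : F.card = 1 := hcard.trans h1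
          obtain ⟨i0, hFi0⟩ := Finset.card_eq_one.mp hF1
          have hi0F : i0 ∈ F := hFi0 ▸ Finset.mem_singleton_self i0
          have hi0 : 0 < |v i0| := (Finset.mem_filter.mp hi0F).2.1
          have hFsum : ∑ i ∈ F, |v i| = |v i0| := by rw [hFi0, Finset.sum_singleton]
          have hPlt : (P.card : ℝ) * R < (s:ℝ) * R := by
            rw [hPsum]
            rw [hFsum] at hsum_le
            linarith
          have : (P.card : ℝ) < (s:ℝ) := lt_of_mul_lt_mul_right hPlt hR0.le
          have hP : P.card < s := by exact_mod_cast this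
          omega
      have hcardsupp : (Finset.univ.filter fun i => v i ≠ 0).card ≤ s := by
        calc (Finset.univ.filter fun i => v i ≠ 0).card ≤ (F ∪ P).card :=
              Finset.card_le_card hsupp
        _ ≤ F.card + P.card := Finset.card_union_le F P
        _ ≤ s := hcardPF
      refine pv_mem_pvK ?_ hcardsupp
      have heq : ∑ i ∈ (Finset.univ.filter fun i => v i ≠ 0), (v i)^2 = ∑ i, (v i)^2 :=
        Finset.sum_filter_of_ne (fun x _ hx h0 => hx (by rw [h0]; norm_num))
      have hle : ∑ i ∈ (Finset.univ.filter fun i => v i ≠ 0), (v i)^2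
          ≤ ((Finset.univ.filter fun i => v i ≠ 0).card : ℝ) * R^2 := by
        rw [← nsmul_eq_mul]
        exact Finset.sum_le_card_nsmul _ _ _ fun i _ => by
          rw [← sq_abs]; exact pow_le_pow_left₀ (abs_nonneg _) (hinf i) 2
      calc ∑ i, (v i)^2 = ∑ i ∈ (Finset.univ.filter fun i => v i ≠ 0), (v i)^2 := heq.symm
      _ ≤ ((Finset.univ.filter fun i => v i ≠ 0).card : ℝ) * R^2 := hle
      _ ≤ (s:ℝ) * R^2 := by
          apply mul_le_mul_of_nonneg_right _ (by positivity)
          exact_mod_cast hcardsupp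
      _ = 1 := hR2
    · -- inductive step
      push_neg at hn
      obtain ⟨i, hi, j, hj, hij⟩ := Finset.one_lt_card.mp
        (show 1 < (Finset.univ.filter fun i => 0 < |v i| ∧ |v i| < R).card by
          rw [hcard]; exact hn)
      rw [Finset.mem_filter] at hi hj
      have hvi := hi.2
      have hvj := hj.2
      set tp := min (R - |v i|) |v j| with htpdef
      set tm := min |v i| (R - |v j|) with htmdef
      have htp0 : 0 < tp := lt_min (by linarith [hvi.2]) hvj.1
      have htm0 : 0 < tm := lt_min hvi.1 (by linarith [hvj.2])
      obtain ⟨habsP, hinfP, hl1P, hsubP⟩ :=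
        pv_step hij hvi hvj hinf htp0.le (min_le_left _ _) (min_le_right _ _)
      obtain ⟨habsM, hinfM, hl1M, hsubM⟩ :=
        pv_step hij.symm hvj hvi hinf htm0.le (min_le_right _ _) (min_le_left _ _)
      have hcardP : (Finset.univ.filter fun k =>
          0 < |pv_upd v i j tp k| ∧ |pv_upd v i j tp k| < R).card < n := by
        rw [← hcard]
        apply Finset.card_lt_card
        apply (Finset.ssubset_iff_of_subset hsubP).mpr
        rcases min_cases (R - |v i|) |v j| with ⟨he, _⟩|⟨he, _⟩
        · refine ⟨i, Finset.mem_filter.mpr ⟨Finset.mem_univ i, hvi⟩, fun hmem => ?_⟩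
          have hlt := (Finset.mem_filter.mp hmem).2.2
          rw [habsP i, if_pos rfl, htpdef, he] at hlt
          linarith
        · refine ⟨j, Finset.mem_filter.mpr ⟨Finset.mem_univ j, hvj⟩, fun hmem => ?_⟩
          have hlt := (Finset.mem_filter.mp hmem).2.1
          rw [habsP j, if_neg hij.symm, if_pos rfl, htpdef, he] at hlt
          linarith
      have hcardM : (Finset.univ.filter fun k =>
          0 < |pv_upd v j i tm k| ∧ |pv_upd v j i tm k| < R).card < n := by
        rw [← hcard]
        apply Finset.card_lt_card
        apply (Finset.ssubset_iff_of_subset hsubM).mpr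
        rcases min_cases |v i| (R - |v j|) with ⟨he, _⟩|⟨he, _⟩
        · refine ⟨i, Finset.mem_filter.mpr ⟨Finset.mem_univ i, hvi⟩, fun hmem => ?_⟩
          have hlt := (Finset.mem_filter.mp hmem).2.1
          rw [habsM i, if_neg hij, if_pos rfl, htmdef, he] at hlt
          linarith
        · refine ⟨j, Finset.mem_filter.mpr ⟨Finset.mem_univ j, hvj⟩, fun hmem => ?_⟩
          have hlt := (Finset.mem_filter.mp hmem).2.2
          rw [habsM j, if_pos rfl, htmdef, he] at hlt
          linarith
      have hmemP : pv_upd v i j tp ∈ convexHull ℝ (pvK d s) :=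
        ih _ hcardP _ rfl hinfP (by rw [hl1P]; exact hl1)
      have hmemM : pv_upd v j i tm ∈ convexHull ℝ (pvK d s) :=
        ih _ hcardM _ rfl hinfM (by rw [hl1M]; exact hl1)
      have hT : (0:ℝ) < tp + tm := by linarith
      have hcomb := (convex_convexHull ℝ (pvK d s)) hmemP hmemM
        (le_of_lt (div_pos htm0 hT)) (le_of_lt (div_pos htp0 hT))
        (by rw [← add_div, div_eq_one_iff_eq hT.ne']; ring)
      have hveq : v = (tm / (tp + tm)) • pv_upd v i j tp
          + (tp / (tp + tm)) • pv_upd v j i tm := by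
        ext k
        show v k = (tm / (tp + tm)) * pv_upd v i j tp k
          + (tp / (tp + tm)) * pv_upd v j i tm k
        simp only [pv_upd, PiLp.toLp_apply]
        by_cases hki : k = i
        · rw [if_pos hki, if_neg (by rw [hki]; exact hij), if_pos hki, hki]
          field_simp
          ring
        · by_cases hkj : k = j
          · rw [if_neg hki, if_pos hkj, if_pos hkj, hkj]
            field_simp
            ring
          · rw [if_neg hki, if_neg hkj, if_neg hkj, if_neg hki]
            field_simp
            ring
      rw [hveq]
      exact hcomb

open Pointwise

/-- Plan–Vershynin: `Π₁(s) ⊆ 2 · conv̄(Π₀(s))`, where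
`Π₀(s)` is the set of `s`-sparse vectors in the unit Euclidean ball and
`Π₁(s)` is the set of unit-ball vectors with `‖u‖₁ ≤ √s`. -/
theorem pi1_subset_two_convexHull_pi0 (d s : ℕ) :
    {u : EuclideanSpace ℝ (Fin d) | ‖u‖ ≤ 1 ∧ ∑ i, |u i| ≤ Real.sqrt s}
      ⊆ (2 : ℝ) • closure (convexHull ℝ
          {u : EuclideanSpace ℝ (Fin d) | ‖u‖ ≤ 1 ∧
            (Finset.univ.filter fun i => u i ≠ 0).card ≤ s}) := by
  intro u hu
  obtain ⟨hnorm, hl1⟩ := hu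
  rw [Set.mem_smul_set]
  rcases Nat.eq_zero_or_pos s with hs0|hs
  · -- s = 0 : u = 0
    subst hs0
    have hu0 : u = 0 := by
      ext k
      have h1 : |u k| ≤ ∑ i, |u i| :=
        Finset.single_le_sum (f := fun i => |u i|) (fun i _ => abs_nonneg _)
          (Finset.mem_univ k)
      have h2 : ∑ i, |u i| ≤ 0 := by simpa using hl1
      have : |u k| = 0 := le_antisymm (h1.trans h2) (abs_nonneg _)
      simpa using this
    refine ⟨0, ?_, by rw [hu0]; simp⟩
    apply subset_closure
    apply subset_convexHull
    refine ⟨by simp, ?_⟩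
    simp
  · -- s ≥ 1
    have hs0 : 0 < (s:ℝ) := by exact_mod_cast hs
    have hsq : 0 < Real.sqrt s := Real.sqrt_pos.mpr hs0
    set R : ℝ := (Real.sqrt (s:ℕ))⁻¹ with hRdef
    have hR0 : 0 < R := inv_pos.mpr hsq
    have hsR : (s:ℝ) * R = Real.sqrt s := by
      rw [hRdef]
      nth_rewrite 1 [← Real.mul_self_sqrt hs0.le]
      field_simp
    set ub : EuclideanSpace ℝ (Fin d) := WithLp.toLp 2 fun k => if R ≤ |u k| then u k else 0 with hubdef
    set us : EuclideanSpace ℝ (Fin d) := WithLp.toLp 2 fun k => if R ≤ |u k| then 0 else u k with husdef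
    have huadd : ub + us = u := by
      ext k
      show (if R ≤ |u k| then u k else 0) + (if R ≤ |u k| then 0 else u k) = u k
      by_cases h : R ≤ |u k| <;> simp [h]
    -- membership of the "big" part
    have hub : ub ∈ pvK d s := by
      apply pv_mem_pvK
      · have hle : ∀ i, (ub i)^2 ≤ (u i)^2 := by
          intro i
          show (if R ≤ |u i| then u i else 0)^2 ≤ (u i)^2
          by_cases h : R ≤ |u i| <;> simp [h] <;> positivity
        exact (Finset.sum_le_sum fun i _ => hle i).trans (pv_sq_sum_le hnorm)
      · have hsub : (Finset.univ.filter fun i => ub i ≠ 0)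
            ⊆ Finset.univ.filter fun i : Fin d => R ≤ |u i| := by
          intro k hk
          rw [Finset.mem_filter] at hk ⊢
          refine ⟨Finset.mem_univ k, ?_⟩
          by_contra h
          apply hk.2
          show (if R ≤ |u k| then u k else 0) = 0
          rw [if_neg h]
        have hBsum : ((Finset.univ.filter fun i : Fin d => R ≤ |u i|).card : ℝ) * R
            ≤ ∑ i, |u i| := by
          rw [← nsmul_eq_mul]
          calc (Finset.univ.filter fun i : Fin d => R ≤ |u i|).card • R
              = ∑ _i ∈ Finset.univ.filter fun i : Fin d => R ≤ |u i|, R := by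
                rw [Finset.sum_const]
          _ ≤ ∑ i ∈ Finset.univ.filter fun i : Fin d => R ≤ |u i|, |u i| :=
                Finset.sum_le_sum fun i hi => (Finset.mem_filter.mp hi).2
          _ ≤ ∑ i, |u i| := Finset.sum_le_sum_of_subset_of_nonneg
                (Finset.subset_univ _) (fun i _ _ => abs_nonneg _)
        have hcardB : ((Finset.univ.filter fun i : Fin d => R ≤ |u i|).card : ℝ) ≤ (s:ℝ) := by
          apply le_of_mul_le_mul_right _ hR0
          calc ((Finset.univ.filter fun i : Fin d => R ≤ |u i|).card : ℝ) * R
              ≤ ∑ i, |u i| := hBsum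
          _ ≤ Real.sqrt s := hl1
          _ = (s:ℝ) * R := hsR.symm
        have hcardB' : (Finset.univ.filter fun i : Fin d => R ≤ |u i|).card ≤ s := by
          exact_mod_cast hcardB
        exact (Finset.card_le_card hsub).trans hcardB'
    -- membership of the "small" part
    have hus : us ∈ convexHull ℝ (pvK d s) := by
      apply pv_keyA hs _ us rfl
      · intro k
        show |if R ≤ |u k| then 0 else u k| ≤ R
        by_cases h : R ≤ |u k|
        · rw [if_pos h]; simpa using hR0.le
        · rw [if_neg h]; linarith [not_le.mp h]
      · calc ∑ k, |us k| ≤ ∑ k, |u k| := by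
              apply Finset.sum_le_sum
              intro k _
              show |if R ≤ |u k| then 0 else u k| ≤ |u k|
              by_cases h : R ≤ |u k| <;> simp [h]
        _ ≤ Real.sqrt s := hl1
        _ = (s:ℝ) * R := hsR.symm
    have hcomb := (convex_convexHull ℝ (pvK d s)) (subset_convexHull ℝ _ hub) hus
      (by norm_num : (0:ℝ) ≤ 1/2) (by norm_num : (0:ℝ) ≤ 1/2) (by norm_num)
    refine ⟨(1/2 : ℝ) • ub + (1/2 : ℝ) • us, subset_closure hcomb, ?_⟩
    rw [smul_add, smul_smul, smul_smul]
    norm_num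
    exact huadd
end
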